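/- arXiv:2409.18080 — 2 statements merged into one kernel-verified Lean document; each statement's English description precedes it below -/
import Mathlib

section
/- Let K = ℚ(√D) with D ≥ 2 squarefree and discriminant Δ. If α = eα_{i,r} + fα_{i,r+1} with i ≥ -1 odd, 0 ≤ r ≤ u_{i+2}-1, e ≥ 1, f ≥ 0, then Nm(α) < √Δ·((u_{i+2}-r+2)e + (u_{i+2}-r+1)f)·((u_{i+2}-r+1)e + (u_{i+2}-r)f). -/
noncomputable section

/-- `ω_D`: the standard generator of the ring of integers of `ℚ(√D)`. -/
def omegaD (D : ℕ) : ℝ := if D % 4 = 1 then (1 + Real.sqrt D) / 2 else Real.sqrt D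

/-- The Galois conjugate of `ω_D`. -/
def omegaD' (D : ℕ) : ℝ := if D % 4 = 1 then (1 - Real.sqrt D) / 2 else -Real.sqrt D

/-- Elements of `O_K` in coordinates: `(x, y)` represents `x + y·ω_D`. -/
abbrev OK : Type := ℤ × ℤ

/-- First real embedding. -/
def emb1 (D : ℕ) (a : OK) : ℝ := a.1 + a.2 * omegaD D

/-- Second real embedding (Galois conjugate). -/
def emb2 (D : ℕ) (a : OK) : ℝ := a.1 + a.2 * omegaD' D

/-- Galois conjugation on `O_K`. -/
def conjOK (D : ℕ) (a : OK) : OK := (a.1 + (if D % 4 = 1 then (1 : ℤ) else 0) * a.2, -a.2)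

/-- Total positivity. -/
def TotPos (D : ℕ) (a : OK) : Prop := 0 < emb1 D a ∧ 0 < emb2 D a

/-- The field norm. -/
def Nm (D : ℕ) (a : OK) : ℝ := emb1 D a * emb2 D a

/-- Indecomposability: totally positive and not a sum of two totally positive elements. -/
def Indec (D : ℕ) (a : OK) : Prop :=
  TotPos D a ∧ ¬ ∃ b c : OK, TotPos D b ∧ TotPos D c ∧ a = b + c

/-- Number of partitions of `α` into indecomposable parts (`p_K(α|I)`). -/
def pKI (D : ℕ) (α : OK) : ℕ :=
  Set.ncard {s : Multiset OK | (∀ x ∈ s, Indec D x) ∧ s.sum = α}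

/-- Number of partitions of `α` into totally positive parts (`p_K(α)`). -/
def pK (D : ℕ) (α : OK) : ℕ :=
  Set.ncard {s : Multiset OK | (∀ x ∈ s, TotPos D x) ∧ s.sum = α}

/-- Discriminant of `ℚ(√D)`. -/
def disc (D : ℕ) : ℕ := if D % 4 = 1 then D else 4 * D

/-- The ordered two-sided sequence of indecomposables together with
the coefficients `v j ≥ 2` from the Hejda–Kala relation `v_j β_j = β_{j-1} + β_{j+1}`. -/
structure BetaSeq (D : ℕ) (β : ℤ → OK) (v : ℤ → ℤ) : Prop where
  indec : ∀ j, Indec D (β j)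
  surj : ∀ a : OK, Indec D a → ∃ j, β j = a
  mono : StrictMono fun j => emb1 D (β j)
  zero : β 0 = (1, 0)
  conj_eq : ∀ j, β (-j) = conjOK D (β j)
  v_two_le : ∀ j, 2 ≤ v j
  v_symm : ∀ j, v (-j) = v j
  rel : ∀ j, v j • β j = β (j - 1) + β (j + 1)

/-- The continued fraction data of `ω_D = [⌈u₀/2⌉, \overline{u₁, …, u_s}]` (with `u_s = u_0`),
with tails `γ_0 = ω_D`, `γ_i = [u_i, u_{i+1}, …]` for `i ≥ 1`. -/
structure CFData (D : ℕ) (u : ℕ → ℕ) (γ : ℕ → ℝ) : Prop where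
  gamma_zero : γ 0 = omegaD D
  u_zero : (u 0 : ℤ) = 2 * ⌊omegaD D⌋ - (if D % 4 = 1 then 1 else 0)
  head : omegaD D = (⌊omegaD D⌋ : ℝ) + 1 / γ 1
  step : ∀ i, 1 ≤ i → γ i = u i + 1 / γ (i + 1)
  one_lt : ∀ i, 1 ≤ i → 1 < γ i
  floor_eq : ∀ i, 1 ≤ i → (u i : ℤ) = ⌊γ i⌋
  period : ∃ s, 1 ≤ s ∧ u s = u 0 ∧ ∀ i, 1 ≤ i → u (i + s) = u i

/-- The convergents `α_i = p_i + q_i ξ_D`, indexed by `i ≥ -1`. -/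
structure ConvData (D : ℕ) (u : ℕ → ℕ) (a : ℤ → OK) : Prop where
  neg_one : a (-1) = (1, 0)
  zero : a 0 = (⌊omegaD D⌋, 0) + (if D % 4 = 1 then ((-1 : ℤ), (1 : ℤ)) else (0, 1))
  recur : ∀ i : ℤ, -1 ≤ i → a (i + 2) = (u (i + 2).toNat : ℤ) • a (i + 1) + a i

/-- Semiconvergents `α_{i,r} = α_i + r·α_{i+1}`. -/
def semiconv (a : ℤ → OK) (i r : ℤ) : OK := a i + r • a (i + 1)

section StmtNineAux
variable {D : ℕ} {u : ℕ → ℕ} {γ : ℕ → ℝ} {a : ℤ → OK}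

lemma emb1_add (D : ℕ) (p q : OK) : emb1 D (p + q) = emb1 D p + emb1 D q := by
  simp [emb1]; ring
lemma emb1_smul (D : ℕ) (n : ℤ) (p : OK) : emb1 D (n • p) = n * emb1 D p := by
  simp [emb1]; ring
lemma emb2_add (D : ℕ) (p q : OK) : emb2 D (p + q) = emb2 D p + emb2 D q := by
  simp [emb2]; ring
lemma emb2_smul (D : ℕ) (n : ℤ) (p : OK) : emb2 D (n • p) = n * emb2 D p := by
  simp [emb2]; ring
lemma sqrtD_gt_one (D : ℕ) (hD : 2 ≤ D) : 1 < Real.sqrt D := by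
  have : (1:ℝ) < (D:ℝ) := by exact_mod_cast Nat.lt_of_lt_of_le one_lt_two hD
  nlinarith [Real.sq_sqrt (by positivity : (0:ℝ) ≤ (D:ℝ)), Real.sqrt_nonneg (D:ℝ)]
lemma omega_gt_one (D : ℕ) (hD : 2 ≤ D) : 1 < omegaD D := by
  have h := sqrtD_gt_one D hD
  unfold omegaD; split <;> nlinarith
lemma floor_omega_pos (D : ℕ) (hD : 2 ≤ D) : 1 ≤ ⌊omegaD D⌋ :=
  Int.le_floor.mpr (by exact_mod_cast (omega_gt_one D hD).le)
lemma omega_sub (D : ℕ) : omegaD D - omegaD' D = Real.sqrt (disc D) := by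
  unfold omegaD omegaD' disc
  split
  · ring
  · rw [show ((4 * D : ℕ) : ℝ) = 2 ^ 2 * D by push_cast; ring, Real.sqrt_mul (by positivity),
      Real.sqrt_sq (by norm_num)]
    ring


lemma gamma_lb (hCF : CFData D u γ) (k : ℕ) (hk : 1 ≤ k) : (u k : ℝ) < γ k := by
  have h1 := hCF.one_lt (k+1) (by omega)
  have h2 := hCF.step k hk
  have : 0 < 1 / γ (k+1) := by positivity
  linarith

lemma gamma_ub (hCF : CFData D u γ) (k : ℕ) (hk : 1 ≤ k) : γ k < u k + 1 := by
  have h1 := hCF.one_lt (k+1) (by omega)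
  have h2 := hCF.step k hk
  have : 1 / γ (k+1) < 1 := by rw [div_lt_one (by linarith)]; linarith
  linarith

lemma u_pos (hCF : CFData D u γ) (k : ℕ) (hk : 1 ≤ k) : 1 ≤ u k := by
  have h1 := hCF.one_lt k hk
  have h2 := hCF.floor_eq k hk
  have : (1:ℤ) ≤ ⌊γ k⌋ := Int.le_floor.mpr (by exact_mod_cast h1.le)
  omega

lemma sqrt_disc_pos (D : ℕ) (hD : 2 ≤ D) : 0 < Real.sqrt (disc D) := by
  rw [← omega_sub]
  have h := sqrtD_gt_one D hD
  unfold omegaD omegaD'; split <;> nlinarith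

/-- Big combined induction. -/
lemma keyfacts (hD : 2 ≤ D) (hCF : CFData D u γ) (hconv : ConvData D u a) :
    ∀ i : ℤ, -1 ≤ i →
    (emb2 D (a (i+1)) = -emb2 D (a i) / γ (i+2).toNat) ∧
    ((Even i ∧ emb2 D (a i) < 0) ∨ (Odd i ∧ 0 < emb2 D (a i))) ∧
    |emb2 D (a i)| ≤ 1 ∧
    0 < emb1 D (a i) ∧ emb1 D (a i) < emb1 D (a (i+1)) ∧
    emb2 D (a i) * emb1 D (a (i+1)) - emb2 D (a (i+1)) * emb1 D (a i)
      = (if Even i then -Real.sqrt (disc D) else Real.sqrt (disc D)) := by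
  refine Int.le_induction ?_ ?_
  · -- base case i = -1
    have hω := omega_gt_one D hD
    have hfl := floor_omega_pos D hD
    have hflR : (1:ℝ) ≤ (⌊omegaD D⌋ : ℝ) := by exact_mod_cast hfl
    have hfl2 : (⌊omegaD D⌋ : ℝ) ≤ omegaD D := Int.floor_le _
    have hhead := hCF.head
    have hx0 : emb2 D (a 0) = (⌊omegaD D⌋ : ℝ) - omegaD D := by
      rw [hconv.zero]
      unfold emb2 omegaD omegaD'
      by_cases h : D % 4 = 1 <;> simp [h] <;> push_cast <;> ring
    have hy0 : emb1 D (a 0) = (⌊omegaD D⌋ : ℝ) - (if D % 4 = 1 then 1 else 0) + omegaD D := by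
      rw [hconv.zero]
      unfold emb1
      by_cases h : D % 4 = 1 <;> simp [h] <;> push_cast <;> ring
    have hxm : emb2 D (a (-1)) = 1 := by rw [hconv.neg_one]; simp [emb2]
    have hym : emb1 D (a (-1)) = 1 := by rw [hconv.neg_one]; simp [emb1]
    have hy0' : emb1 D (a 0) - emb2 D (a 0) = Real.sqrt (disc D) := by
      rw [hx0, hy0, ← omega_sub D]
      unfold omegaD omegaD'
      by_cases h : D % 4 = 1 <;> simp [h] <;> ring
    simp only [show (-1:ℤ)+1 = 0 by norm_num, show (-1:ℤ)+2 = 1 by norm_num,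
      show ((1:ℤ)).toNat = 1 by rfl]
    refine ⟨?_, ?_, ?_, ?_, ?_, ?_⟩
    · rw [hxm, hx0, neg_div]
      have := hCF.head
      linarith
    · right
      refine ⟨⟨-1, by ring⟩, by rw [hxm]; norm_num⟩
    · rw [hxm]; norm_num
    · rw [hym]; norm_num
    · rw [hym, hy0]
      split <;> push_cast <;> linarith
    · have hne : ¬ Even (-1 : ℤ) := by decide
      rw [if_neg hne, hxm, hym, ← hy0']
      ring
  · -- inductive step
    intro i hi ih
    obtain ⟨h1, h2, h3, h4, h5, h6⟩ := ih
    set k := (i+2).toNat with hkdef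
    have hk1 : 1 ≤ k := by omega
    have e1 : (i+1+2).toNat = k + 1 := by omega
    have hrec := hconv.recur i hi
    have hx2 : emb2 D (a (i+2)) = (u k : ℝ) * emb2 D (a (i+1)) + emb2 D (a i) := by
      rw [hrec, emb2_add, emb2_smul]; push_cast; ring
    have hy2 : emb1 D (a (i+2)) = (u k : ℝ) * emb1 D (a (i+1)) + emb1 D (a i) := by
      rw [hrec, emb1_add, emb1_smul]; push_cast; ring
    have hγk := hCF.one_lt k hk1
    have hγk1 := hCF.one_lt (k+1) (by omega)
    have hstep := hCF.step k hk1
    have hγk0 : γ k ≠ 0 := by linarith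
    have hγk10 : γ (k+1) ≠ 0 := by linarith
    have hup := u_pos hCF k hk1
    have hupR : (1:ℝ) ≤ (u k : ℝ) := by exact_mod_cast hup
    have hxi : emb2 D (a i) = -γ k * emb2 D (a (i+1)) := by
      rw [h1]; field_simp
    have hnew1 : emb2 D (a (i+1+1)) = -emb2 D (a (i+1)) / γ (k+1) := by
      rw [show i+1+1 = i+2 by ring, hx2, hxi, hstep]
      field_simp
      ring
    have hsign1 : (Even (i+1) ∧ emb2 D (a (i+1)) < 0) ∨ (Odd (i+1) ∧ 0 < emb2 D (a (i+1))) := by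
      rcases h2 with ⟨he, hx⟩ | ⟨ho, hx⟩
      · right
        refine ⟨Even.add_one he, ?_⟩
        rw [h1]
        apply div_pos <;> linarith
      · left
        refine ⟨Odd.add_one ho, ?_⟩
        rw [h1, neg_div]
        have : 0 < emb2 D (a i) / γ k := div_pos hx (by linarith)
        linarith
    have habs1 : |emb2 D (a (i+1))| ≤ 1 := by
      rw [h1, abs_div, abs_neg, abs_of_pos (by linarith : (0:ℝ) < γ k)]
      exact le_trans (div_le_self (abs_nonneg _) hγk.le) h3
    refine ⟨by rw [e1]; exact hnew1, hsign1, habs1, by linarith, ?_, ?_⟩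
    · rw [show i+1+1 = i+2 by ring, hy2]
      nlinarith
    · rw [show i+1+1 = i+2 by ring, hx2, hy2]
      have hpar : (if Even (i+1) then -Real.sqrt (disc D) else Real.sqrt (disc D))
          = -(if Even i then -Real.sqrt (disc D) else Real.sqrt (disc D)) := by
        by_cases he : Even i
        · rw [if_pos he, if_neg (by simp [Int.even_add_one, he])]
          try ring
        · rw [if_pos (Int.even_add_one.mpr he), if_neg he]
          try ring
      rw [hpar, ← h6]
      ring
end StmtNineAux

/-- the norm bound for `α = e·α_{i,r} + f·α_{i,r+1}`. -/
theorem stmt9 (D : ℕ) (hD : 2 ≤ D) (hsq : Squarefree D)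
    (u : ℕ → ℕ) (γ : ℕ → ℝ) (hCF : CFData D u γ)
    (a : ℤ → OK) (hconv : ConvData D u a)
    (i : ℤ) (hi : -1 ≤ i) (hodd : Odd i)
    (r e f : ℤ) (hr0 : 0 ≤ r) (hr1 : r ≤ (u (i + 2).toNat : ℤ) - 1)
    (he : 1 ≤ e) (hf : 0 ≤ f)
    (α : OK) (hα : α = e • semiconv a i r + f • semiconv a i (r + 1)) :
    Nm D α < Real.sqrt (disc D) *
      (((u (i + 2).toNat : ℝ) - r + 2) * e + ((u (i + 2).toNat : ℝ) - r + 1) * f) *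
      (((u (i + 2).toNat : ℝ) - r + 1) * e + ((u (i + 2).toNat : ℝ) - r) * f) := by

  obtain ⟨h1, h2, h3, h4, h5, h6⟩ := keyfacts hD hCF hconv i hi
  set k := (i+2).toNat with hkdef
  have hk1 : 1 ≤ k := by omega
  set X := emb2 D (a i) with hXdef
  set X' := emb2 D (a (i+1)) with hX'def
  set Y := emb1 D (a i) with hYdef
  set Y' := emb1 D (a (i+1)) with hY'def
  set G := γ k with hGdef
  set S := Real.sqrt (disc D) with hSdef
  set U := ((u k : ℝ)) with hUdef
  set R := ((r : ℝ)) with hRdef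
  set E := ((e : ℝ)) with hEdef
  set F := ((f : ℝ)) with hFdef
  have hSpos : 0 < S := sqrt_disc_pos D hD
  have hγk := hCF.one_lt k hk1
  have hG1 : U < G := gamma_lb hCF k hk1
  have hG2 : G < U + 1 := gamma_ub hCF k hk1
  have hU1' := u_pos hCF k hk1
  have hGpos : 0 < G := by linarith
  have hU1 : (1:ℝ) ≤ U := by rw [hUdef]; exact_mod_cast hU1'
  have hR : 0 ≤ R := by rw [hRdef]; exact_mod_cast hr0
  have hRU : R ≤ U - 1 := by
    rw [hRdef, hUdef]
    have : (r:ℝ) ≤ ((u k : ℤ) : ℝ) - 1 := by exact_mod_cast hr1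
    push_cast at this ⊢; linarith
  have hE : (1:ℝ) ≤ E := by rw [hEdef]; exact_mod_cast he
  have hF : (0:ℝ) ≤ F := by rw [hFdef]; exact_mod_cast hf
  -- facts from keyfacts
  clear_value k X X' Y Y' G S U R E F
  have hX : 0 < X := by
    rcases h2 with ⟨he2, _⟩ | ⟨_, hx⟩
    · exact absurd hodd (Int.not_odd_iff_even.mpr he2)
    · exact hx
  have hX1 : X ≤ 1 := by
    have := abs_le.mp h3; exact this.2
  have hd : X * Y' - X' * Y = S := by
    rw [h6, if_neg (Int.not_even_iff_odd.mpr hodd)]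
  have hX' : X' = -X / G := h1
  have hS : X * Y' + X * Y / G = S := by
    rw [hX'] at hd
    linear_combination hd
  -- coefficients
  set b := R*E + (R+1)*F with hbdef
  set c := (E+F) - b/G with hcdef
  clear_value b c
  have hb : 0 ≤ b := by
    rw [hbdef]
    have := mul_nonneg hR (by linarith : (0:ℝ) ≤ E)
    nlinarith
  have hemb1 : emb1 D α = (E+F) * Y + b * Y' := by
    rw [hα]
    unfold semiconv
    simp only [emb1_add, emb1_smul]
    rw [← hYdef, ← hY'def, hbdef, hEdef, hFdef, hRdef]
    push_cast
    ring
  have hemb2 : emb2 D α = (E+F) * X + b * X' := by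
    rw [hα]
    unfold semiconv
    simp only [emb2_add, emb2_smul]
    rw [← hXdef, ← hX'def, hbdef, hEdef, hFdef, hRdef]
    push_cast
    ring
  have hGne : G ≠ 0 := ne_of_gt hGpos
  have hNm : Nm D α = c^2 * (X*Y) + b*c*S := by
    rw [Nm, hemb1, hemb2, hX', ← hS, hcdef]
    field_simp
    ring
  -- bounds
  have hXY : 0 < X*Y := mul_pos hX h4
  have hXYS : X*Y < S := by
    have h7 : X*Y ≤ X*Y' := mul_le_mul_of_nonneg_left h5.le hX.le
    have h8 : 0 < X*Y/G := div_pos hXY hGpos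
    linarith only [hS, h7, h8]
  have hc_pos : 0 < c := by
    rw [hcdef, sub_pos, div_lt_iff₀ hGpos]
    have p1 : 0 ≤ (U-1-R)*E := mul_nonneg (by linarith) (by linarith)
    have p2 : 0 ≤ (U-1-R)*F := mul_nonneg (by linarith) hF
    have p3 : 0 < (G-U)*(E+F) := mul_pos (by linarith) (by linarith)
    nlinarith only [hbdef, p1, p2, p3, hE]
  have hUp1 : (0:ℝ) < U + 1 := by linarith
  have hcB : (U+1)*c ≤ (U-R+1)*E + (U-R)*F := by
    have h9 : b/(U+1) ≤ b/G := div_le_div_of_nonneg_left hb hGpos hG2.le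
    have h10 : c ≤ (E+F) - b/(U+1) := by rw [hcdef]; linarith only [h9]
    have h11 : (U+1) * ((E+F) - b/(U+1)) = (U+1)*(E+F) - b := by
      field_simp
    have h12 : (U+1)*c ≤ (U+1)*((E+F) - b/(U+1)) :=
      mul_le_mul_of_nonneg_left h10 hUp1.le
    rw [h11] at h12
    nlinarith only [h12, hbdef]
  set A := (U-R+2)*E + (U-R+1)*F with hAdef
  set B := (U-R+1)*E + (U-R)*F with hBdef
  clear_value A B
  have hB0 : 0 ≤ B := by
    rw [hBdef]
    have p1 : 0 ≤ (U-R+1)*E := mul_nonneg (by linarith) (by linarith)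
    have p2 : 0 ≤ (U-R)*F := mul_nonneg (by linarith) hF
    linarith only [p1, p2]
  have key1 : Nm D α < c*(c+b)*S := by
    nlinarith only [hNm, mul_pos (mul_pos hc_pos hc_pos) (sub_pos.mpr hXYS)]
  have hBA : B + (U+1)*b ≤ (U+1)^2*A := by
    rw [hAdef, hbdef]
    have p1 : 0 ≤ (U-1-R)*(U*E) := mul_nonneg (by linarith) (mul_nonneg (by linarith) (by linarith))
    have p2 : 0 ≤ (U-1-R)*(U*F) := mul_nonneg (by linarith) (mul_nonneg (by linarith) hF)
    have p3 : 0 ≤ R*E := mul_nonneg hR (by linarith)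
    have p4 : 0 ≤ R*F := mul_nonneg hR hF
    have p5 : 0 ≤ U*E := mul_nonneg (by linarith) (by linarith)
    have p6 : 0 ≤ U*F := mul_nonneg (by linarith) hF
    have p7 : 0 ≤ U*U*E := mul_nonneg (mul_nonneg (by linarith) (by linarith)) (by linarith)
    have p8 : 0 ≤ U*U*F := mul_nonneg (mul_nonneg (by linarith) (by linarith)) hF
    have p9 : 0 ≤ (U-1-R)*E := mul_nonneg (by linarith) (by linarith)
    have p10 : 0 ≤ (U-1-R)*F := mul_nonneg (by linarith) hF
    nlinarith only [hBdef, p1, p2, p3, p4, p5, p6, p7, p8, p9, p10, hE, hF, hU1, hR, hRU]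
  have key2 : c*(c+b) ≤ A*B := by
    have h8 : ((U+1)*c)*((U+1)*c) ≤ B*B := mul_self_le_mul_self (by positivity) hcB
    have h9 : ((U+1)*c)*b ≤ B*b := mul_le_mul_of_nonneg_right hcB hb
    have h12 : B*(B + (U+1)*b) ≤ B*((U+1)^2*A) := mul_le_mul_of_nonneg_left hBA hB0
    have h13 : (U+1)*(((U+1)*c)*b) ≤ (U+1)*(B*b) := mul_le_mul_of_nonneg_left h9 hUp1.le
    have e2 : ((U+1)*c)*((U+1)*c) + (U+1)*(((U+1)*c)*b) = (U+1)^2 * (c*(c+b)) := by ring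
    have e3 : B*B + (U+1)*(B*b) = B*(B+(U+1)*b) := by ring
    have e4 : B*((U+1)^2*A) = (U+1)^2*(A*B) := by ring
    have h15 : (U+1)^2*(c*(c+b)) ≤ (U+1)^2*(A*B) := by
      linarith only [h8, h13, h12, e2, e3, e4]
    exact le_of_mul_le_mul_left h15 (by positivity)
  calc Nm D α < c*(c+b)*S := key1
    _ ≤ A*B*S := mul_le_mul_of_nonneg_right key2 hSpos.le
    _ = S * A * B := by ring
end
end

section
/- Let K = ℚ(√D) with D ≥ 2 squarefree and discriminant Δ. If α ∈ O_K^+ can be expressed as a sum of indecomposables in exactly 2 ways, i.e. p_K(α|I) = 2, then Nm(α) < 5√Δ(√Δ+1)(3√Δ+2). -/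
noncomputable section

namespace Stmt12Proof

/-- `t ∈ {0,1}` : the trace of `ω`. -/
def par (D : ℕ) : ℤ := if D % 4 = 1 then 1 else 0

/-- `√Δ`. -/
noncomputable def RR (D : ℕ) : ℝ := Real.sqrt (disc D)

/-- `θ = -ω'`. -/
noncomputable def th (D : ℕ) : ℝ := -(omegaD' D)

/-- The norm as an integer. -/
def nrm (D : ℕ) (a : OK) : ℤ :=
  a.1 ^ 2 + par D * a.1 * a.2 - a.2 ^ 2 * (if D % 4 = 1 then ((D : ℤ) - 1) / 4 else (D : ℤ))

section Basic

variable {D : ℕ}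

lemma not_isSquare (hD : 2 ≤ D) (hsq : Squarefree D) : ¬ IsSquare D := by
  rintro ⟨k, hk⟩
  have h1 := hsq k (hk ▸ dvd_rfl)
  rw [Nat.isUnit_iff] at h1
  subst h1; omega

lemma irr_sqrtD (hD : 2 ≤ D) (hsq : Squarefree D) : Irrational (Real.sqrt D) :=
  irrational_sqrt_natCast_iff.mpr (not_isSquare hD hsq)

lemma sqrtD_gt_one (hD : 2 ≤ D) : (1 : ℝ) < Real.sqrt D := by
  have h1 : (1:ℝ) < (D:ℝ) := by exact_mod_cast (by omega : 1 < D)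
  have := Real.sqrt_lt_sqrt (by norm_num) h1
  rwa [Real.sqrt_one] at this

lemma omega_add_omega' : omegaD D + omegaD' D = (par D : ℝ) := by
  unfold omegaD omegaD' par; split <;> push_cast <;> ring

lemma disc_ge_five (hD : 2 ≤ D) : 5 ≤ disc D := by
  unfold disc; split <;> omega

lemma RR_pos (hD : 2 ≤ D) : 0 < RR D := by
  have := disc_ge_five hD
  exact Real.sqrt_pos.mpr (by positivity)

lemma RR_sq (hD : 2 ≤ D) : RR D ^ 2 = (disc D : ℝ) :=
  Real.sq_sqrt (by positivity)

lemma RR_gt_two (hD : 2 ≤ D) : 2 < RR D := by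
  have h5 : (5:ℝ) ≤ (disc D : ℝ) := by exact_mod_cast disc_ge_five hD
  nlinarith [RR_sq hD, (RR_pos hD).le, h5]

lemma omega_sub_omega' (hD : 2 ≤ D) : omegaD D - omegaD' D = RR D := by
  unfold omegaD omegaD' RR disc
  split
  · ring
  · rw [show ((4 * D : ℕ) : ℝ) = 4 * (D:ℝ) by push_cast; ring,
      show (4 : ℝ) * (D:ℝ) = 2^2 * (D:ℝ) by ring,
      Real.sqrt_mul (by positivity), Real.sqrt_sq (by norm_num)]
    ring

lemma th_pos (hD : 2 ≤ D) : 0 < th D := by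
  unfold th omegaD'
  split
  · have := sqrtD_gt_one hD; linarith
  · have := sqrtD_gt_one hD; linarith

lemma th_irr (hD : 2 ≤ D) (hsq : Squarefree D) : Irrational (th D) := by
  have h := irr_sqrtD hD hsq
  unfold th omegaD'
  split
  · have h2 : Irrational (Real.sqrt D - 1) := by
      simpa using h.sub_ratCast 1
    have h3 : Irrational ((Real.sqrt D - 1) / 2) := by
      simpa using h2.div_natCast (by norm_num : (2:ℕ) ≠ 0)
    convert h3 using 1; push_cast; ring
  · simpa using h

lemma omega_eq_par_add_th : omegaD D = (par D : ℝ) + th D := by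
  have := omega_add_omega' (D := D)
  unfold th at *; linarith

lemma RR_eq (hD : 2 ≤ D) : RR D = 2 * th D + (par D : ℝ) := by
  have h1 := omega_sub_omega' hD
  have h2 := omega_add_omega' (D := D)
  unfold th at *; linarith

end Basic

section Emb

variable {D : ℕ}

lemma emb1_add (a b : OK) : emb1 D (a + b) = emb1 D a + emb1 D b := by
  simp [emb1]; push_cast; ring

lemma emb2_add (a b : OK) : emb2 D (a + b) = emb2 D a + emb2 D b := by
  simp [emb2]; push_cast; ring

lemma emb1_sub (a b : OK) : emb1 D (a - b) = emb1 D a - emb1 D b := by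
  simp [emb1]; push_cast; ring

lemma emb2_sub (a b : OK) : emb2 D (a - b) = emb2 D a - emb2 D b := by
  simp [emb2]; push_cast; ring

lemma emb1_zsmul (n : ℤ) (a : OK) : emb1 D (n • a) = n * emb1 D a := by
  simp [emb1]; push_cast; ring

lemma emb2_zsmul (n : ℤ) (a : OK) : emb2 D (n • a) = n * emb2 D a := by
  simp [emb2]; push_cast; ring

lemma emb2_eq2 (a : OK) : emb2 D a = a.1 - a.2 * th D := by
  unfold emb2 th; ring

lemma emb2_eq_zero (hD : 2 ≤ D) (hsq : Squarefree D) {a : OK}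
    (h : emb2 D a = 0) : a = 0 := by
  rw [emb2_eq2] at h
  rcases eq_or_ne a.2 0 with h2 | h2
  · have : (a.1 : ℝ) = 0 := by rw [h2] at h; push_cast at h; linarith
    have h1 : a.1 = 0 := by exact_mod_cast this
    exact Prod.ext h1 h2
  · exfalso
    have h2' : (a.2 : ℝ) ≠ 0 := by exact_mod_cast h2
    have hth : ((a.1 / a.2 : ℚ) : ℝ) = th D := by
      push_cast
      rw [div_eq_iff h2']
      linarith
    exact (th_irr hD hsq) ⟨_, hth⟩

lemma emb1_eq_zero (hD : 2 ≤ D) (hsq : Squarefree D) {a : OK}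
    (h : emb1 D a = 0) : a = 0 := by
  have hom : omegaD D = (par D : ℝ) + th D := omega_eq_par_add_th
  rcases eq_or_ne a.2 0 with h2 | h2
  · unfold emb1 at h
    rw [h2] at h; push_cast at h
    have h1 : a.1 = 0 := by exact_mod_cast (by linarith : (a.1:ℝ) = 0)
    exact Prod.ext h1 h2
  · exfalso
    unfold emb1 at h
    rw [hom] at h
    have h2' : (a.2 : ℝ) ≠ 0 := by exact_mod_cast h2
    have hth : ((-(a.1 + par D * a.2) / a.2 : ℚ) : ℝ) = th D := by
      push_cast
      rw [div_eq_iff h2']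
      nlinarith [h]
    exact (th_irr hD hsq) ⟨_, hth⟩

lemma nrm_cast (hD : 2 ≤ D) (a : OK) :
    (nrm D a : ℝ) = emb1 D a * emb2 D a := by
  have hs : Real.sqrt D * Real.sqrt D = (D:ℝ) :=
    Real.mul_self_sqrt (by positivity)
  unfold nrm emb1 emb2 omegaD omegaD' par
  rcases eq_or_ne (D % 4) 1 with h4 | h4
  · simp only [if_pos h4]
    obtain ⟨k, hk⟩ : (4:ℤ) ∣ ((D:ℤ) - 1) := by omega
    rw [hk, Int.mul_ediv_cancel_left _ (by norm_num)]
    have hkr : (D : ℝ) - 1 = 4 * (k:ℝ) := by exact_mod_cast hk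
    push_cast
    linear_combination ((a.2:ℝ)^2/4) * hs + ((a.2:ℝ)^2/4) * hkr
  · simp only [if_neg h4]
    push_cast
    linear_combination ((a.2:ℝ)^2) * hs

lemma nrm_ne_zero (hD : 2 ≤ D) (hsq : Squarefree D) {a : OK} (ha : a ≠ 0) :
    nrm D a ≠ 0 := by
  intro h
  have := nrm_cast hD a
  rw [h] at this
  push_cast at this
  rcases mul_eq_zero.mp this.symm with h1 | h1
  · exact ha (emb1_eq_zero hD hsq h1)
  · exact ha (emb2_eq_zero hD hsq h1)

end Emb

end Stmt12Proof
namespace Stmt12Proof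

section Core

variable {D : ℕ}

/-- The geometric invariant for a consecutive pair of indecomposables. -/
structure Pre (D : ℕ) (β γ : OK) : Prop where
  b1 : 0 < emb1 D β
  b2 : 0 < emb2 D β
  g1 : 0 < emb1 D γ
  g2 : 0 < emb2 D γ
  lt1 : emb1 D β < emb1 D γ
  lt2 : emb2 D γ < emb2 D β
  det : emb1 D β * emb2 D γ - emb2 D β * emb1 D γ = -(RR D)

/-- The coefficient in the relation `w • γ = β + δ`. -/
noncomputable def wv (D : ℕ) (β γ : OK) : ℤ := ⌈emb2 D β / emb2 D γ⌉

/-- The next indecomposable. -/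
noncomputable def stp (D : ℕ) (β γ : OK) : OK := wv D β γ • γ - β

variable {β γ : OK}

lemma Pre.ratio_gt_one (h : Pre D β γ) : 1 < emb2 D β / emb2 D γ :=
  (one_lt_div h.g2).mpr h.lt2

/-- The ratio `β₂/γ₂` is not an integer. -/
lemma Pre.ratio_ne_int (hD : 2 ≤ D) (hsq : Squarefree D) (h : Pre D β γ)
    (n : ℤ) : emb2 D β / emb2 D γ ≠ (n : ℝ) := by
  intro he
  have hb2 : emb2 D β = n * emb2 D γ := by
    rw [div_eq_iff (by exact h.g2.ne' : emb2 D γ ≠ 0)] at he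
    linarith
  have h0 : emb2 D (β - n • γ) = 0 := by
    rw [emb2_sub, emb2_zsmul]; linarith
  have hz : β = n • γ := by
    have h' := emb2_eq_zero hD hsq h0
    exact sub_eq_zero.mp h'
  have hdet := h.det
  rw [hz, emb1_zsmul, emb2_zsmul] at hdet
  have hR := RR_pos hD
  nlinarith [hdet]

lemma Pre.wv_lb (h : Pre D β γ) : emb2 D β / emb2 D γ ≤ (wv D β γ : ℝ) := Int.le_ceil _

lemma Pre.wv_ub (h : Pre D β γ) : (wv D β γ : ℝ) < emb2 D β / emb2 D γ + 1 := by
  have := Int.ceil_lt_add_one (emb2 D β / emb2 D γ)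
  exact this

lemma Pre.wv_lb' (hD : 2 ≤ D) (hsq : Squarefree D) (h : Pre D β γ) :
    emb2 D β / emb2 D γ < (wv D β γ : ℝ) :=
  lt_of_le_of_ne (Int.le_ceil _) fun he => h.ratio_ne_int hD hsq (wv D β γ) he

lemma Pre.wv_ge_two (hD : 2 ≤ D) (hsq : Squarefree D) (h : Pre D β γ) :
    2 ≤ wv D β γ := by
  have h1 := h.ratio_gt_one
  have h2 := h.wv_lb (D := D)
  have h3 : (1:ℝ) < (wv D β γ : ℝ) := lt_of_lt_of_le h1 h2
  have h4 : (1:ℤ) < wv D β γ := by exact_mod_cast h3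
  omega

lemma stp_emb1 : emb1 D (stp D β γ) = (wv D β γ : ℝ) * emb1 D γ - emb1 D β := by
  unfold stp; rw [emb1_sub, emb1_zsmul]

lemma stp_emb2 : emb2 D (stp D β γ) = (wv D β γ : ℝ) * emb2 D γ - emb2 D β := by
  unfold stp; rw [emb2_sub, emb2_zsmul]

lemma Pre.step (hD : 2 ≤ D) (hsq : Squarefree D) (h : Pre D β γ) :
    Pre D γ (stp D β γ) := by
  have hw2 : (2:ℝ) ≤ (wv D β γ : ℝ) := by exact_mod_cast h.wv_ge_two hD hsq
  have hlb := h.wv_lb' hD hsq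
  have hub := h.wv_ub (D := D)
  have hg2 := h.g2
  have hmul1 : emb2 D β < (wv D β γ : ℝ) * emb2 D γ := (div_lt_iff₀ hg2).mp hlb
  have hmul2 : ((wv D β γ : ℝ) - 1) * emb2 D γ < emb2 D β := by
    have h' : (wv D β γ : ℝ) - 1 < emb2 D β / emb2 D γ := by linarith
    exact (lt_div_iff₀ hg2).mp h'
  have hd2 : 0 < emb2 D (stp D β γ) := by
    rw [stp_emb2]; linarith
  have hd2' : emb2 D (stp D β γ) < emb2 D γ := by
    rw [stp_emb2]; nlinarith
  have hd1 : emb1 D γ < emb1 D (stp D β γ) := by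
    rw [stp_emb1]
    nlinarith [h.lt1, h.g1]
  exact {
    b1 := h.g1
    b2 := h.g2
    g1 := h.g1.trans hd1
    g2 := hd2
    lt1 := hd1
    lt2 := hd2'
    det := by
      rw [stp_emb1, stp_emb2]
      linear_combination h.det }

end Core

end Stmt12Proof
namespace Stmt12Proof

section Indec

variable {D : ℕ}

lemma intCast_le {x y : ℤ} (h : x ≤ y) : (x:ℝ) ≤ (y:ℝ) := by exact_mod_cast h

/-- Box criterion for indecomposability. -/
lemma indec_iff_box {σ : OK} (hσ : TotPos D σ) :
    Indec D σ ↔ ¬ ∃ τ : OK, 0 < emb1 D τ ∧ emb1 D τ < emb1 D σ ∧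
      0 < emb2 D τ ∧ emb2 D τ < emb2 D σ := by
  constructor
  · rintro ⟨-, hdec⟩ ⟨τ, h1, h2, h3, h4⟩
    exact hdec ⟨τ, σ - τ, ⟨h1, h3⟩,
      ⟨by rw [emb1_sub]; linarith, by rw [emb2_sub]; linarith⟩,
      by abel⟩
  · intro hbox
    refine ⟨hσ, ?_⟩
    rintro ⟨b, c, hb, hc, rfl⟩
    exact hbox ⟨b, hb.1, by rw [emb1_add]; linarith [hc.1],
      hb.2, by rw [emb2_add]; linarith [hc.2]⟩

variable {β γ : OK}

/-- In a `Pre`-pair, `(β, γ)` is a `ℤ`-basis: explicit coordinates. -/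
lemma Pre.coord (hD : 2 ≤ D) (h : Pre D β γ) (τ : OK) :
    τ = (γ.2 * τ.1 - γ.1 * τ.2) • β + (β.1 * τ.2 - β.2 * τ.1) • γ := by
  have hcast : emb1 D β * emb2 D γ - emb2 D β * emb1 D γ
      = ((β.2 * γ.1 - β.1 * γ.2 : ℤ) : ℝ) * (omegaD D - omegaD' D) := by
    unfold emb1 emb2; push_cast; ring
  have hdet := h.det
  rw [hcast, omega_sub_omega' hD] at hdet
  have hR := RR_pos hD
  have hd1 : ((β.2 * γ.1 - β.1 * γ.2 : ℤ) : ℝ) = -1 := by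
    have h0 : (((β.2 * γ.1 - β.1 * γ.2 : ℤ) : ℝ) + 1) * RR D = 0 := by ring_nf; ring_nf at hdet; linarith [hdet]
    rcases mul_eq_zero.mp h0 with h' | h'
    · linarith
    · exact absurd h' hR.ne'
  have hd : β.2 * γ.1 - β.1 * γ.2 = -1 := by exact_mod_cast hd1
  have h1 : (γ.2 * τ.1 - γ.1 * τ.2) * β.1 + (β.1 * τ.2 - β.2 * τ.1) * γ.1 = τ.1 := by
    linear_combination (-τ.1) * hd
  have h2 : (γ.2 * τ.1 - γ.1 * τ.2) * β.2 + (β.1 * τ.2 - β.2 * τ.1) * γ.2 = τ.2 := by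
    linear_combination (-τ.2) * hd
  ext
  · simpa [Prod.smul_fst, smul_eq_mul] using h1.symm
  · simpa [Prod.smul_snd, smul_eq_mul] using h2.symm

set_option maxHeartbeats 1000000 in
/-- KEY: the next element `δ = w•γ - β` is indecomposable. -/
lemma Pre.indec_stp (hD : 2 ≤ D) (hsq : Squarefree D) (h : Pre D β γ) :
    Indec D (stp D β γ) := by
  have hstep := h.step hD hsq
  have htp : TotPos D (stp D β γ) := ⟨hstep.g1, hstep.g2⟩
  rw [indec_iff_box htp]
  rintro ⟨τ, ht1, ht2, ht3, ht4⟩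
  set w : ℤ := wv D β γ with hw
  have hw2 : 2 ≤ w := h.wv_ge_two hD hsq
  have hwr : (2:ℝ) ≤ (w:ℝ) := by exact_mod_cast hw2
  have hlb := h.wv_lb' hD hsq      -- β₂/γ₂ < w
  have hub := h.wv_ub (D := D)     -- w < β₂/γ₂ + 1
  have hg2 := h.g2
  have hg1 := h.g1
  have hb1 := h.b1
  have hb2 := h.b2
  have hl1 := h.lt1
  have hmul1 : emb2 D β < (w:ℝ) * emb2 D γ := (div_lt_iff₀ hg2).mp hlb
  have hmul2 : ((w:ℝ) - 1) * emb2 D γ < emb2 D β := by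
    have h' : (w:ℝ) - 1 < emb2 D β / emb2 D γ := by linarith
    exact (lt_div_iff₀ hg2).mp h'
  obtain ha : τ = (γ.2 * τ.1 - γ.1 * τ.2) • β + (β.1 * τ.2 - β.2 * τ.1) • γ :=
    h.coord hD τ
  set a : ℤ := γ.2 * τ.1 - γ.1 * τ.2 with hadef
  set b : ℤ := β.1 * τ.2 - β.2 * τ.1 with hbdef
  have he1 : emb1 D τ = (a:ℝ) * emb1 D β + (b:ℝ) * emb1 D γ := by
    rw [ha, emb1_add, emb1_zsmul, emb1_zsmul]
  have he2 : emb2 D τ = (a:ℝ) * emb2 D β + (b:ℝ) * emb2 D γ := by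
    rw [ha, emb2_add, emb2_zsmul, emb2_zsmul]
  rw [he1] at ht1 ht2
  rw [he2] at ht3 ht4
  rw [stp_emb1] at ht2
  rw [stp_emb2] at ht4
  rcases lt_trichotomy a 0 with haneg | hazero | hapos
  · -- a ≤ -1
    have ham : (1:ℝ) ≤ -(a:ℝ) := by
      have h' := intCast_le (show a ≤ -1 by omega); push_cast at h'; linarith
    have hb_lb : (-(a:ℝ)) * ((w:ℝ) - 1) + 1 ≤ (b:ℝ) := by
      have hx1 : (-(a:ℝ)) * (((w:ℝ) - 1) * emb2 D γ) ≤ (-(a:ℝ)) * emb2 D β :=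
        mul_le_mul_of_nonneg_left hmul2.le (by linarith)
      have hx2 : (-(a:ℝ)) * emb2 D β < (b:ℝ) * emb2 D γ := by nlinarith [ht3]
      have hblt : (-(a:ℝ)) * ((w:ℝ) - 1) < (b:ℝ) := by
        have := lt_of_mul_lt_mul_right
          (show ((-(a:ℝ)) * ((w:ℝ)-1)) * emb2 D γ < (b:ℝ) * emb2 D γ by nlinarith) hg2.le
        exact this
      have hint : -a * (w - 1) < b := by
        exact_mod_cast (by push_cast; linarith : ((-a * (w-1) : ℤ):ℝ) < ((b:ℤ):ℝ))
      have hint2 : -a * (w - 1) + 1 ≤ b := Int.add_one_le_iff.mpr hint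
      have := intCast_le hint2; push_cast at this; linarith
    rcases eq_or_lt_of_le (show a ≤ -1 by omega) with haeq | halt
    · -- a = -1
      have ha1 : (a:ℝ) = -1 := by exact_mod_cast haeq
      rw [ha1] at ht2 ht3
      have hbw : (b:ℝ) < (w:ℝ) := by nlinarith [ht2]
      have hbw' : b ≤ w - 1 := by
        have : b < w := by exact_mod_cast hbw
        omega
      have hbr : (b:ℝ) ≤ (w:ℝ) - 1 := by
        have := intCast_le hbw'; push_cast at this; linarith
      -- ht3 : 0 < -β₂ + b γ₂ ≤ -β₂ + (w-1) γ₂ < 0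
      nlinarith [hmul2, ht3]
    · -- a ≤ -2
      have ham2 : (2:ℝ) ≤ -(a:ℝ) := by
        have h' := intCast_le (show a ≤ -2 by omega); push_cast at h'; linarith
      have hkey : ((b:ℝ) - (w:ℝ)) * emb1 D γ < ((-(a:ℝ)) - 1) * emb1 D β := by
        nlinarith [ht2]
      have hbw : ((-(a:ℝ)) - 1) * ((w:ℝ) - 1) ≤ (b:ℝ) - (w:ℝ) := by
        nlinarith [hb_lb]
      have hchain : ((-(a:ℝ)) - 1) * (((w:ℝ) - 1) * emb1 D γ) < ((-(a:ℝ)) - 1) * emb1 D β := by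
        calc ((-(a:ℝ)) - 1) * (((w:ℝ) - 1) * emb1 D γ) = (((-(a:ℝ)) - 1) * ((w:ℝ) - 1)) * emb1 D γ := by ring
        _ ≤ ((b:ℝ) - (w:ℝ)) * emb1 D γ := mul_le_mul_of_nonneg_right hbw hg1.le
        _ < ((-(a:ℝ)) - 1) * emb1 D β := hkey
      have hcontra : ((w:ℝ) - 1) * emb1 D γ < emb1 D β :=
        lt_of_mul_lt_mul_left hchain (by linarith)
      nlinarith [hl1, hg1]
  · -- a = 0
    have ha0 : (a:ℝ) = 0 := by exact_mod_cast hazero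
    rw [ha0] at ht3 ht4
    have hbp : (0:ℝ) < (b:ℝ) := by nlinarith [ht3]
    have hbl : (b:ℝ) < 1 := by nlinarith [ht4, hmul2]
    have hz : (0:ℤ) < b := by exact_mod_cast hbp
    have : (1:ℝ) ≤ (b:ℝ) := by exact_mod_cast hz
    linarith
  · -- a ≥ 1
    have ha1 : (1:ℝ) ≤ (a:ℝ) := by exact_mod_cast hapos
    have hprod : (a:ℝ) * (((w:ℝ) - 1) * emb2 D γ) < (a:ℝ) * emb2 D β :=
      mul_lt_mul_of_pos_left hmul2 (by linarith)
    have hble : (b:ℝ) * emb2 D γ < (1 - (a:ℝ) * ((w:ℝ) - 1)) * emb2 D γ := by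
      nlinarith [ht4, hprod, hmul1]
    have hblt : (b:ℝ) < 1 - (a:ℝ) * ((w:ℝ) - 1) :=
      lt_of_mul_lt_mul_right (by linarith [hble]) hg2.le
    have hbz : b ≤ -(a * (w - 1)) := by
      have h' : b < 1 + -(a * (w-1)) := by
        exact_mod_cast (by push_cast; linarith : ((b:ℤ):ℝ) < ((1 + -(a * (w-1)) : ℤ):ℝ))
      exact Int.lt_add_one_iff.mp (by linarith [h'])
    have hbzr : (b:ℝ) ≤ -((a:ℝ) * ((w:ℝ) - 1)) := by
      have := intCast_le hbz; push_cast at this; linarith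
    have hstep1 : (b:ℝ) * emb1 D γ ≤ -((a:ℝ) * ((w:ℝ) - 1)) * emb1 D γ :=
      mul_le_mul_of_nonneg_right hbzr hg1.le
    have hneg : emb1 D β - ((w:ℝ) - 1) * emb1 D γ < 0 := by nlinarith [hl1, hg1]
    have hfin : (a:ℝ) * emb1 D β + (b:ℝ) * emb1 D γ ≤
        (a:ℝ) * (emb1 D β - ((w:ℝ) - 1) * emb1 D γ) := by nlinarith [hstep1]
    have hneg2 : (a:ℝ) * (emb1 D β - ((w:ℝ) - 1) * emb1 D γ) < 0 := by nlinarith [hneg]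
    linarith [ht1]

end Indec

end Stmt12Proof
namespace Stmt12Proof

section NormBound

variable {D : ℕ} {β γ : OK}

lemma nrm_ge_one (hD : 2 ≤ D) (hsq : Squarefree D) {σ : OK} (htp : TotPos D σ) :
    (1:ℝ) ≤ (nrm D σ : ℝ) := by
  have hne : σ ≠ 0 := by
    intro h0
    have := htp.1
    rw [h0] at this
    simp [emb1] at this
  have hpos : (0:ℝ) < (nrm D σ : ℝ) := by
    rw [nrm_cast hD]; exact mul_pos htp.1 htp.2
  have h1 : 0 < nrm D σ := by exact_mod_cast hpos
  exact_mod_cast h1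

/-- Dress–Scharlau type bound: the second member of a `Pre`-pair has norm `≤ Δ/4`. -/
lemma Pre.nrm_le (hD : 2 ≤ D) (hsq : Squarefree D) (h : Pre D β γ) :
    (nrm D γ : ℝ) ≤ RR D ^ 2 / 4 := by
  set E1 : ℝ := emb1 D γ - emb1 D β with hE1d
  set E2 : ℝ := emb2 D γ - emb2 D β with hE2d
  have hE1 : 0 < E1 := by rw [hE1d]; linarith [h.lt1]
  have hE2 : E2 < 0 := by rw [hE2d]; linarith [h.lt2]
  have hn : (nrm D (γ - β) : ℝ) = E1 * E2 := by
    rw [nrm_cast hD, emb1_sub, emb2_sub]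
  have hint : nrm D (γ - β) ≤ -1 := by
    have h1 : (nrm D (γ - β):ℝ) < 0 := by
      rw [hn]; exact mul_neg_of_pos_of_neg hE1 hE2
    have h2 : nrm D (γ - β) < 0 := by exact_mod_cast h1
    omega
  have hnr : E1 * E2 ≤ -1 := by
    rw [← hn]; exact_mod_cast hint
  have hdet := h.det
  have hd2 : emb1 D β * E2 - emb2 D β * E1 = -(RR D) := by
    rw [hE1d, hE2d]; linear_combination hdet
  have hNg : (nrm D γ : ℝ) = emb1 D γ * emb2 D γ := nrm_cast hD γ
  have hg1' : emb1 D γ = emb1 D β + E1 := by rw [hE1d]; ring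
  have hg2' : emb2 D γ = emb2 D β + E2 := by rw [hE2d]; ring
  have hkey : 4 * (-(E1*E2)) * (emb1 D γ * emb2 D γ)
      = RR D^2 - ((emb1 D β * E2 + emb2 D β * E1) + 2*(E1*E2))^2 := by
    rw [hg1', hg2']
    linear_combination (emb1 D β * E2 - emb2 D β * E1 - RR D) * hd2
  have hpos : 0 < emb1 D γ * emb2 D γ := mul_pos h.g1 h.g2
  have h4 : 4 * (emb1 D γ * emb2 D γ) ≤ 4 * (-(E1*E2)) * (emb1 D γ * emb2 D γ) := by
    nlinarith [hpos, hnr]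
  nlinarith [hkey, sq_nonneg ((emb1 D β * E2 + emb2 D β * E1) + 2*(E1*E2)), h4, hNg]

set_option maxHeartbeats 2000000 in
/-- The coefficient bound: `w² Nγ ≤ (5/4)Δ + (w+1)√Δ`. -/
lemma Pre.v_sq_nrm (hD : 2 ≤ D) (hsq : Squarefree D) (h : Pre D β γ)
    (hNb : (nrm D β : ℝ) ≤ RR D ^ 2 / 4) :
    ((wv D β γ : ℝ))^2 * (nrm D γ : ℝ)
      ≤ (5/4) * RR D^2 + ((wv D β γ : ℝ) + 1) * RR D := by
  have hstep := h.step hD hsq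
  have hNg : (nrm D γ:ℝ) ≤ RR D^2/4 := h.nrm_le hD hsq
  have hNd : (nrm D (stp D β γ):ℝ) ≤ RR D^2/4 := hstep.nrm_le hD hsq
  set W : ℝ := (wv D β γ : ℝ) with hWd
  set B1 := emb1 D β; set B2 := emb2 D β
  set G1 := emb1 D γ; set G2 := emb2 D γ
  have hD1 : emb1 D (stp D β γ) = W * G1 - B1 := stp_emb1
  have hD2 : emb2 D (stp D β γ) = W * G2 - B2 := stp_emb2
  set D1 := emb1 D (stp D β γ)
  set D2 := emb2 D (stp D β γ)
  have hb1 : 0 < B1 := h.b1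
  have hb2 : 0 < B2 := h.b2
  have hg1 : 0 < G1 := h.g1
  have hg2 : 0 < G2 := h.g2
  have hd1 : 0 < D1 := hstep.g1
  have hd2 : 0 < D2 := hstep.g2
  have hd2' : D2 < G2 := hstep.lt2
  have hlt1 : B1 < G1 := h.lt1
  have hmul1 : B2 < W * G2 := (div_lt_iff₀ hg2).mp (h.wv_lb' hD hsq)
  have hmul2 : (W - 1) * G2 < B2 := by
    have h' : W - 1 < B2 / G2 := by
      have := h.wv_ub (D := D); rw [← hWd] at this; linarith
    exact (lt_div_iff₀ hg2).mp h'
  have hdet2 : G1 * D2 - G2 * D1 = -(RR D) := hstep.det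
  have hrel1 : W * G1 = B1 + D1 := by rw [hD1]; ring
  have hrel2 : W * G2 = B2 + D2 := by rw [hD2]; ring
  have hNgr : (nrm D γ:ℝ) = G1 * G2 := nrm_cast hD γ
  have hNbr : (nrm D β:ℝ) = B1 * B2 := nrm_cast hD β
  have hNdr : (nrm D (stp D β γ):ℝ) = D1 * D2 := nrm_cast hD _
  have hR := RR_pos hD
  -- W² G1 G2 = (B1+D1)(B2+D2) ≤ (B1+D1)(B2+G2)
  have e0 : W^2 * (G1 * G2) = (B1 + D1) * (B2 + D2) := by
    rw [← hrel1, ← hrel2]; ring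
  have e1 : (B1 + D1) * (B2 + D2) ≤ (B1 + D1) * (B2 + G2) := by nlinarith [hd2']
  -- bound the four pieces
  have p2 : B1 * G2 < B1 * B2 := by nlinarith [h.lt2]
  have p4 : D1 * G2 = G1 * D2 + RR D := by linarith [hdet2]
  have p4' : D1 * G2 ≤ G1 * G2 + RR D := by nlinarith [hd2']
  have p3 : D1 * B2 ≤ B1 * G2 + D1 * D2 + W * RR D := by
    have q1 : D1 * B2 < D1 * (W * G2) := by nlinarith [hmul1]
    have q2 : D1 * (W * G2) = W * (D1 * G2) := by ring
    have q3 : W * (D1 * G2) = W * G1 * D2 + W * RR D := by rw [p4]; ring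
    have q4 : W * G1 * D2 = B1 * D2 + D1 * D2 := by rw [hrel1]; ring
    have q5 : B1 * D2 ≤ B1 * G2 := by nlinarith [hd2']
    linarith
  have htot : W^2 * (G1 * G2) ≤ 3 * (B1*B2) + (G1*G2) + (D1*D2) + (W + 1) * RR D := by
    nlinarith [e0, e1, p2, p3, p4']
  rw [hNgr]
  calc W^2 * (G1*G2) ≤ 3 * (B1*B2) + (G1*G2) + (D1*D2) + (W + 1) * RR D := htot
  _ ≤ 3 * (RR D^2/4) + (RR D^2/4) + (RR D^2/4) + (W+1)*RR D := by
      have := hNbr ▸ hNb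
      have := hNgr ▸ hNg
      have := hNdr ▸ hNd
      linarith
  _ = (5/4) * RR D^2 + (W+1) * RR D := by ring

set_option maxHeartbeats 1000000 in
/-- `w ≤ 2√Δ`. -/
lemma Pre.v_le (hD : 2 ≤ D) (hsq : Squarefree D) (h : Pre D β γ)
    (hNb : (nrm D β : ℝ) ≤ RR D ^ 2 / 4) :
    (wv D β γ : ℝ) ≤ 2 * RR D := by
  have h1 := h.v_sq_nrm hD hsq hNb
  have h2 : (1:ℝ) ≤ (nrm D γ:ℝ) := nrm_ge_one hD hsq ⟨h.g1, h.g2⟩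
  have hW2 : (2:ℝ) ≤ (wv D β γ:ℝ) := by exact_mod_cast h.wv_ge_two hD hsq
  have hR := RR_gt_two hD
  by_contra hcon
  push_neg at hcon
  nlinarith [h1, h2, hW2, hR, hcon]

end NormBound

end Stmt12Proof
namespace Stmt12Proof

section Seq

variable {D : ℕ}

noncomputable def cc (D : ℕ) : ℤ := ⌈th D⌉

noncomputable def mubar (D : ℕ) : OK := (cc D + par D, -1)

noncomputable def sq (D : ℕ) : ℕ → OK
  | 0 => mubar D
  | 1 => (1, 0)
  | n+2 => stp D (sq D n) (sq D (n+1))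

lemma emb1_one : emb1 D ((1,0) : OK) = 1 := by simp [emb1]
lemma emb2_one : emb2 D ((1,0) : OK) = 1 := by simp [emb2]

lemma emb1_mubar : emb1 D (mubar D) = (cc D : ℝ) - th D := by
  unfold emb1 mubar
  rw [omega_eq_par_add_th]
  push_cast; ring

lemma emb2_mubar : emb2 D (mubar D) = (cc D : ℝ) + (par D : ℝ) + th D := by
  unfold emb2 mubar th
  push_cast; ring

lemma th_lt_cc (hD : 2 ≤ D) (hsq : Squarefree D) : th D < (cc D : ℝ) := by
  refine lt_of_le_of_ne (Int.le_ceil _) fun he => ?_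
  exact (th_irr hD hsq) ⟨(cc D : ℚ), by rw [he]; push_cast; ring⟩

lemma cc_lt_th_add_one : (cc D : ℝ) < th D + 1 := Int.ceil_lt_add_one _

lemma cc_pos (hD : 2 ≤ D) : 0 < cc D := Int.ceil_pos.mpr (th_pos hD)

lemma par_nonneg : (0:ℝ) ≤ (par D : ℝ) := by unfold par; split <;> norm_num

lemma pre0 (hD : 2 ≤ D) (hsq : Squarefree D) : Pre D (mubar D) ((1,0) : OK) := by
  have h1 := th_lt_cc hD hsq
  have h2 := cc_lt_th_add_one (D := D)
  have h3 := th_pos hD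
  have h4 : (1:ℝ) ≤ (cc D : ℝ) := by exact_mod_cast cc_pos hD
  have h5 := par_nonneg (D := D)
  exact {
    b1 := by rw [emb1_mubar]; linarith
    b2 := by rw [emb2_mubar]; linarith
    g1 := by rw [emb1_one]; norm_num
    g2 := by rw [emb2_one]; norm_num
    lt1 := by rw [emb1_mubar, emb1_one]; linarith
    lt2 := by rw [emb2_mubar, emb2_one]; linarith
    det := by rw [emb1_mubar, emb2_mubar, emb1_one, emb2_one, RR_eq hD]; ring }

lemma preAll (hD : 2 ≤ D) (hsq : Squarefree D) :
    ∀ n, Pre D (sq D n) (sq D (n+1))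
  | 0 => pre0 hD hsq
  | (n+1) => (preAll hD hsq n).step hD hsq

lemma nrm_sq_succ_le (hD : 2 ≤ D) (hsq : Squarefree D) (n : ℕ) :
    (nrm D (sq D (n+1)) : ℝ) ≤ RR D^2/4 := by
  have h := (preAll hD hsq n).nrm_le hD hsq
  exact h

-- conjugation lemmas
lemma conj_fst (a : OK) : (conjOK D a).1 = a.1 + par D * a.2 := rfl
lemma conj_snd (a : OK) : (conjOK D a).2 = -a.2 := rfl

lemma conj_def (a : OK) : conjOK D a = (a.1 + par D * a.2, -a.2) := rfl

lemma conj_emb1 (a : OK) : emb1 D (conjOK D a) = emb2 D a := by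
  have h := omega_add_omega' (D := D)
  rw [conj_def]
  unfold emb1 emb2
  push_cast
  linear_combination (-(a.2:ℝ)) * h

lemma conj_emb2 (a : OK) : emb2 D (conjOK D a) = emb1 D a := by
  have h := omega_add_omega' (D := D)
  rw [conj_def]
  unfold emb1 emb2
  push_cast
  linear_combination (-(a.2:ℝ)) * h

lemma conj_conj (a : OK) : conjOK D (conjOK D a) = a := by
  rw [conj_def, conj_def]; ext <;> simp <;> ring

lemma conj_add (a b : OK) : conjOK D (a + b) = conjOK D a + conjOK D b := by
  rw [conj_def, conj_def, conj_def]
  ext <;> simp [Prod.fst_add, Prod.snd_add] <;> ring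

lemma totpos_conj {a : OK} (h : TotPos D a) : TotPos D (conjOK D a) := by
  exact ⟨by rw [conj_emb1]; exact h.2, by rw [conj_emb2]; exact h.1⟩

lemma indec_conj {a : OK} (h : Indec D a) : Indec D (conjOK D a) := by
  obtain ⟨htp, hdec⟩ := h
  refine ⟨totpos_conj htp, ?_⟩
  rintro ⟨b, c, hb, hc, he⟩
  exact hdec ⟨conjOK D b, conjOK D c, totpos_conj hb, totpos_conj hc,
    by rw [← conj_conj (D := D) a, he, conj_add]⟩

lemma nrm_conj (hD : 2 ≤ D) (a : OK) : nrm D (conjOK D a) = nrm D a := by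
  have h : (nrm D (conjOK D a) : ℝ) = (nrm D a : ℝ) := by
    rw [nrm_cast hD, nrm_cast hD, conj_emb1, conj_emb2]; ring
  exact_mod_cast h

lemma wv0 (hD : 2 ≤ D) : wv D (mubar D) ((1,0) : OK) = 2 * cc D + par D := by
  unfold wv
  rw [emb2_one, emb2_mubar, div_one]
  have : (cc D : ℝ) + (par D : ℝ) + th D = th D + ((cc D + par D : ℤ) : ℝ) := by
    push_cast; ring
  rw [this, Int.ceil_add_intCast]
  unfold cc; push_cast; ring

lemma sq_two (hD : 2 ≤ D) : sq D 2 = ((cc D, 1) : OK) := by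
  show stp D (mubar D) ((1,0) : OK) = _
  unfold stp
  rw [wv0 hD]
  unfold mubar
  ext <;> simp [Prod.smul_fst, Prod.smul_snd, smul_eq_mul] <;> ring

lemma mubar_eq_conj (hD : 2 ≤ D) : mubar D = conjOK D (sq D 2) := by
  rw [sq_two hD]
  unfold conjOK mubar
  ext <;> simp [par]

lemma nrm_sq_le (hD : 2 ≤ D) (hsq : Squarefree D) (n : ℕ) :
    (nrm D (sq D n) : ℝ) ≤ RR D^2/4 := by
  cases n with
  | zero =>
    show (nrm D (mubar D) : ℝ) ≤ _
    rw [mubar_eq_conj hD, nrm_conj hD]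
    exact nrm_sq_succ_le hD hsq 1
  | succ n => exact nrm_sq_succ_le hD hsq n

lemma indec_one (hD : 2 ≤ D) (hsq : Squarefree D) : Indec D ((1,0) : OK) := by
  have htp : TotPos D ((1,0) : OK) := ⟨by rw [emb1_one]; norm_num, by rw [emb2_one]; norm_num⟩
  rw [indec_iff_box htp]
  rintro ⟨τ, h1, h2, h3, h4⟩
  rw [emb1_one] at h2
  rw [emb2_one] at h4
  have hne : τ ≠ 0 := by
    intro h0; rw [h0] at h1; simp [emb1] at h1
  have habs : 1 ≤ |nrm D τ| := Int.one_le_abs (nrm_ne_zero hD hsq hne)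
  have : |(nrm D τ : ℝ)| < 1 := by
    rw [nrm_cast hD, abs_mul, abs_of_pos h1, abs_of_pos h3]
    nlinarith
  have habs2 : ((|nrm D τ| : ℤ) : ℝ) < 1 := by rw [Int.cast_abs]; exact this
  have : |nrm D τ| < 1 := by exact_mod_cast habs2
  omega

lemma indecAll (hD : 2 ≤ D) (hsq : Squarefree D) : ∀ n, Indec D (sq D n)
  | 0 => by rw [show sq D 0 = mubar D from rfl, mubar_eq_conj hD]
            exact indec_conj ((preAll hD hsq 0).indec_stp hD hsq)
  | 1 => indec_one hD hsq
  | (n+2) => (preAll hD hsq n).indec_stp hD hsq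

-- growth of emb1 along the sequence
lemma grow (hD : 2 ≤ D) (hsq : Squarefree D) :
    ∀ n, 1 - emb1 D (mubar D) ≤ emb1 D (sq D (n+1)) - emb1 D (sq D n)
  | 0 => by
      rw [show sq D 1 = ((1,0):OK) from rfl, show sq D 0 = mubar D from rfl, emb1_one]
  | (n+1) => by
      have ih := grow hD hsq n
      have hp := preAll hD hsq n
      have hw : (2:ℝ) ≤ (wv D (sq D n) (sq D (n+1)) : ℝ) := by
        exact_mod_cast hp.wv_ge_two hD hsq
      have hstp : emb1 D (sq D (n+2))
          = (wv D (sq D n) (sq D (n+1)) : ℝ) * emb1 D (sq D (n+1)) - emb1 D (sq D n) :=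
        stp_emb1
      have hg1 := hp.g1
      rw [hstp]
      nlinarith [hp.lt1, hp.b1]

lemma emb1_sq_lower (hD : 2 ≤ D) (hsq : Squarefree D) (n : ℕ) :
    (n:ℝ) * (1 - emb1 D (mubar D)) ≤ emb1 D (sq D n) := by
  induction n with
  | zero =>
    have := (preAll hD hsq 0).b1
    push_cast
    nlinarith
  | succ n ih =>
    have hg := grow hD hsq n
    push_cast
    linarith

lemma emb2_sq_le_one (hD : 2 ≤ D) (hsq : Squarefree D) :
    ∀ n, emb2 D (sq D (n+1)) ≤ 1
  | 0 => by rw [show sq D 1 = ((1,0):OK) from rfl, emb2_one]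
  | (n+1) => by
      have ih := emb2_sq_le_one hD hsq n
      have := (preAll hD hsq (n+1)).lt2
      linarith

end Seq

end Stmt12Proof
namespace Stmt12Proof

section Part

variable {D : ℕ}

lemma three_not_two {X : Type*} {S : Set X} (h : S.ncard = 2) {x y z : X}
    (hx : x ∈ S) (hy : y ∈ S) (hz : z ∈ S)
    (hxy : x ≠ y) (hxz : x ≠ z) (hyz : y ≠ z) : False := by
  have hfin : S.Finite := by
    by_contra hinf
    rw [Set.Infinite.ncard hinf] at h
    omega
  have hsub : ({x, y, z} : Set X) ⊆ S := by
    intro w hw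
    rcases hw with rfl | rfl | rfl <;> assumption
  have h3 : ({x, y, z} : Set X).ncard = 3 :=
    Set.ncard_eq_three.mpr ⟨x, y, z, hxy, hxz, hyz, rfl⟩
  have := Set.ncard_le_ncard hsub hfin
  omega

lemma conj_zero : conjOK D (0 : OK) = 0 := by
  rw [conj_def]; ext <;> simp

lemma conj_injective : Function.Injective (conjOK D) := fun a b h => by
  rw [← conj_conj (D := D) a, h, conj_conj]

noncomputable def conjHom (D : ℕ) : OK →+ OK :=
  { toFun := conjOK D, map_zero' := conj_zero, map_add' := conj_add }

lemma conj_sum_map (s : Multiset OK) :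
    (s.map (conjOK D)).sum = conjOK D s.sum :=
  ((conjHom D).map_multiset_sum s).symm

lemma pKI_conj (α : OK) : pKI D (conjOK D α) = pKI D α := by
  unfold pKI
  have himg : {s : Multiset OK | (∀ x ∈ s, Indec D x) ∧ s.sum = conjOK D α}
      = (fun s : Multiset OK => s.map (conjOK D)) ''
        {s : Multiset OK | (∀ x ∈ s, Indec D x) ∧ s.sum = α} := by
    ext s
    simp only [Set.mem_image, Set.mem_setOf_eq]
    constructor
    · rintro ⟨hind, hsum⟩
      refine ⟨s.map (conjOK D), ⟨?_, ?_⟩, ?_⟩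
      · intro x hx
        obtain ⟨y, hy, rfl⟩ := Multiset.mem_map.mp hx
        exact indec_conj (hind y hy)
      · rw [conj_sum_map, hsum, conj_conj]
      · rw [Multiset.map_map]
        have : (conjOK D ∘ conjOK D) = id := by
          funext x; exact conj_conj x
        rw [this, Multiset.map_id]
    · rintro ⟨u, ⟨hind, hsum⟩, rfl⟩
      refine ⟨?_, ?_⟩
      · intro x hx
        obtain ⟨y, hy, rfl⟩ := Multiset.mem_map.mp hx
        exact indec_conj (hind y hy)
      · rw [conj_sum_map, hsum]
  rw [himg, Set.ncard_image_of_injective _ (Multiset.map_injective conj_injective)]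

lemma Nm_conj (α : OK) : Nm D (conjOK D α) = Nm D α := by
  unfold Nm; rw [conj_emb1, conj_emb2]; ring

/-- Partition built from four elements. -/
def pt (p b g d : OK) (k1 k2 k3 k4 : ℕ) : Multiset OK :=
  Multiset.replicate k1 p + Multiset.replicate k2 b +
    Multiset.replicate k3 g + Multiset.replicate k4 d

lemma pt_indec {p b g d : OK} {k1 k2 k3 k4 : ℕ}
    (hp : Indec D p) (hb : Indec D b) (hg : Indec D g) (hd : Indec D d) :
    ∀ x ∈ pt p b g d k1 k2 k3 k4, Indec D x := by
  intro x hx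
  unfold pt at hx
  simp only [Multiset.mem_add] at hx
  rcases hx with ((h | h) | h) | h <;>
    rw [Multiset.eq_of_mem_replicate h] <;> assumption

lemma pt_sum_coord (p b g d : OK) (k1 k2 k3 k4 : ℕ) :
    (pt p b g d k1 k2 k3 k4).sum =
      (((k1 : ℤ) * p.1 + (k2 : ℤ) * b.1 + (k3 : ℤ) * g.1 + (k4 : ℤ) * d.1,
        (k1 : ℤ) * p.2 + (k2 : ℤ) * b.2 + (k3 : ℤ) * g.2 + (k4 : ℤ) * d.2) : OK) := by
  unfold pt
  rw [Multiset.sum_add, Multiset.sum_add, Multiset.sum_add,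
    Multiset.sum_replicate, Multiset.sum_replicate,
    Multiset.sum_replicate, Multiset.sum_replicate]
  ext <;> simp [Prod.fst_add, Prod.snd_add] <;> push_cast <;> ring

lemma pt_count_last {p b g d : OK} {k1 k2 k3 k4 : ℕ}
    (hp : p ≠ d) (hb : b ≠ d) (hg : g ≠ d) :
    (pt p b g d k1 k2 k3 k4).count d = k4 := by
  unfold pt
  simp [Multiset.count_add, Multiset.count_replicate, hp, hb, hg]

lemma pt_count_first {p b g d : OK} {k1 k2 k3 k4 : ℕ}
    (hb : b ≠ p) (hg : g ≠ p) (hd : d ≠ p) :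
    (pt p b g d k1 k2 k3 k4).count p = k1 := by
  unfold pt
  simp [Multiset.count_add, Multiset.count_replicate, hb, hg, hd]

end Part

end Stmt12Proof
namespace Stmt12Proof

section Main

variable {D : ℕ}

lemma emb_diff (hD : 2 ≤ D) (a : OK) :
    emb1 D a - emb2 D a = (a.2 : ℝ) * RR D := by
  have h := omega_sub_omega' hD
  unfold emb1 emb2
  linear_combination (a.2 : ℝ) * h

lemma exists_descent (hD : 2 ≤ D) (hsq : Squarefree D) (α : OK) (hα : TotPos D α)
    (hy : 0 ≤ α.2) :
    ∃ i : ℕ, 0 ≤ emb1 D α * emb2 D (sq D (i+1)) - emb2 D α * emb1 D (sq D (i+1)) ∧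
      emb1 D α * emb2 D (sq D (i+2)) - emb2 D α * emb1 D (sq D (i+2)) < 0 := by
  set g : ℕ → ℝ := fun n =>
    emb1 D α * emb2 D (sq D n) - emb2 D α * emb1 D (sq D n) with hg
  have hg1 : 0 ≤ g 1 := by
    have h1 : g 1 = emb1 D α - emb2 D α := by
      simp only [hg]
      rw [show sq D 1 = ((1,0):OK) from rfl, emb1_one, emb2_one]
      ring
    rw [h1, emb_diff hD]
    have : (0:ℝ) ≤ (α.2:ℝ) := by exact_mod_cast hy
    have := RR_pos hD
    positivity
  -- existence of a negative value
  have hdd : 0 < 1 - emb1 D (mubar D) := by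
    have h1 := cc_lt_th_add_one (D := D)
    rw [emb1_mubar]; linarith
  set dd := 1 - emb1 D (mubar D) with hddd
  have hex : ∃ N : ℕ, g (N + 1) < 0 := by
    obtain ⟨n0, hn0⟩ := exists_nat_gt (emb1 D α / (emb2 D α * dd))
    refine ⟨n0, ?_⟩
    have hα2 : 0 < emb2 D α := hα.2
    have hα1 : 0 < emb1 D α := hα.1
    have hlt : emb1 D α < (n0:ℝ) * (emb2 D α * dd) := by
      rw [div_lt_iff₀ (by positivity)] at hn0
      linarith
    have hlow : ((n0:ℝ) + 1) * dd ≤ emb1 D (sq D (n0+1)) := by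
      have h3 := emb1_sq_lower hD hsq (n0+1)
      rw [hddd]
      push_cast at h3 ⊢
      linarith
    have hup : emb2 D (sq D (n0+1)) ≤ 1 := emb2_sq_le_one hD hsq n0
    have hup2 : emb1 D α * emb2 D (sq D (n0+1)) ≤ emb1 D α := by nlinarith
    have hlow2 : (n0:ℝ) * (emb2 D α * dd) ≤ emb2 D α * emb1 D (sq D (n0+1)) := by
      have h2 : emb2 D α * (((n0:ℝ)+1) * dd) ≤ emb2 D α * emb1 D (sq D (n0+1)) :=
        mul_le_mul_of_nonneg_left hlow hα2.le
      nlinarith [hdd]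
    rw [hg]
    simp only
    linarith
  by_contra hno
  push_neg at hno
  have hall : ∀ m : ℕ, 0 ≤ g (m + 1) := by
    intro m
    induction m with
    | zero => exact hg1
    | succ m ih => exact hno m ih
  obtain ⟨N, hN⟩ := hex
  exact absurd (hall N) (not_le.mpr hN)

lemma aux_able {A B W V : ℝ} (hA0 : 0 ≤ A) (hB0 : 0 ≤ B) (hW : 1 ≤ W) (hV : 1 ≤ V)
    (h1 : A ≤ W - 1) (h2 : B ≤ 2*V - 1) : A*B ≤ 2*(W*V) := by nlinarith

lemma aux_able' {A B W V : ℝ} (hA0 : 0 ≤ A) (hB0 : 0 ≤ B) (hW : 1 ≤ W) (hV : 1 ≤ V)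
    (h1 : A ≤ 2*W - 1) (h2 : B ≤ V - 1) : A*B ≤ 2*(W*V) := by nlinarith

lemma aux_sqmul {A W N : ℝ} (hA0 : 0 ≤ A) (hAW : A ≤ W) (hN : 0 ≤ N) :
    A^2*N ≤ W^2*N := by
  nlinarith [mul_nonneg (mul_nonneg (sub_nonneg.2 hAW) (by linarith : (0:ℝ) ≤ W + A)) hN]

lemma aux_sqmul4 {B V N : ℝ} (hB0 : 0 ≤ B) (hBV : B ≤ 2*V) (hN : 0 ≤ N) :
    B^2*N ≤ 4*(V^2*N) := by
  nlinarith [mul_nonneg (mul_nonneg (sub_nonneg.2 hBV) (by linarith : (0:ℝ) ≤ 2*V + B)) hN]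

lemma aux_sqle {Y M : ℝ} (hY : 0 ≤ Y) (hM : 0 ≤ M) (h : Y^2 ≤ M^2) : Y ≤ M := by
  nlinarith

lemma aux_fin {R : ℝ} (hR : 2 < R) :
    9*(13/4*R^2 + R) + 8*R^3 < 5*R*(R+1)*(3*R+2) := by
  nlinarith [sq_nonneg R,
    mul_pos (show (0:ℝ) < R-2 by linarith)
      (mul_pos (show (0:ℝ) < R by linarith) (show (0:ℝ) < R by linarith))]

lemma final_bound (R A B Wb Wg NB NG X : ℝ)
    (hR : 2 < R)
    (hWb2 : 2 ≤ Wb) (hWb' : Wb ≤ 2*R) (hWg2 : 2 ≤ Wg) (hWg' : Wg ≤ 2*R)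
    (hNB1 : 1 ≤ NB) (hNG1 : 1 ≤ NG)
    (hvb : Wb^2*NB ≤ (5/4)*R^2 + (Wb+1)*R)
    (hvg : Wg^2*NG ≤ (5/4)*R^2 + (Wg+1)*R)
    (hX : 0 < X) (hXsq : X^2 ≤ NB*NG)
    (hA1 : 1 ≤ A) (hB0 : 0 ≤ B)
    (hA2 : A ≤ 2*Wb - 1) (hB2 : B ≤ 2*Wg - 1)
    (hor : A ≤ Wb - 1 ∨ B ≤ Wg - 1) :
    A^2*NB + A*B*(2*X+R) + B^2*NG < 5*R*(R+1)*(3*R+2) := by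
  have hRpos : (0:ℝ) < R := by linarith
  have hR2 : (0:ℝ) < R^2 := pow_pos hRpos 2
  have hR3 : (0:ℝ) < R^3 := pow_pos hRpos 3
  set M : ℝ := 13/4*R^2 + R with hM
  have hMpos : 0 < M := by rw [hM]; linarith
  have hWbR : Wb*R ≤ 2*R^2 := by
    calc Wb*R ≤ 2*R*R := mul_le_mul_of_nonneg_right hWb' hRpos.le
    _ = 2*R^2 := by ring
  have hWgR : Wg*R ≤ 2*R^2 := by
    calc Wg*R ≤ 2*R*R := mul_le_mul_of_nonneg_right hWg' hRpos.le
    _ = 2*R^2 := by ring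
  have hMb : Wb^2*NB ≤ M := by rw [hM]; linarith [hvb, hWbR]
  have hMg : Wg^2*NG ≤ M := by rw [hM]; linarith [hvg, hWgR]
  have hNB0 : (0:ℝ) ≤ NB := by linarith
  have hNG0 : (0:ℝ) ≤ NG := by linarith
  have hWb0 : (0:ℝ) ≤ Wb := by linarith
  have hWg0 : (0:ℝ) ≤ Wg := by linarith
  have hA0 : (0:ℝ) ≤ A := by linarith
  have hWWX : Wb*Wg*X ≤ M := by
    have step1 : X^2*(Wb^2*Wg^2) ≤ (NB*NG)*(Wb^2*Wg^2) :=
      mul_le_mul_of_nonneg_right hXsq (by positivity)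
    have step2 : (Wb^2*NB)*(Wg^2*NG) ≤ M*M :=
      mul_le_mul hMb hMg (mul_nonneg (by positivity) hNG0) hMpos.le
    have hsq1 : (Wb*Wg*X)^2 ≤ M^2 := by
      calc (Wb*Wg*X)^2 = X^2*(Wb^2*Wg^2) := by ring
      _ ≤ (NB*NG)*(Wb^2*Wg^2) := step1
      _ = (Wb^2*NB)*(Wg^2*NG) := by ring
      _ ≤ M*M := step2
      _ = M^2 := by ring
    exact aux_sqle (by positivity) hMpos.le hsq1
  have hWbWg : Wb*Wg ≤ 4*R^2 := by
    calc Wb*Wg ≤ (2*R)*(2*R) := mul_le_mul hWb' hWg' hWg0 (by linarith)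
    _ = 4*R^2 := by ring
  have key : A*B ≤ 2*(Wb*Wg) → A*B*(2*X) ≤ 4*M ∧ A*B*R ≤ 8*R^3 := by
    intro hq3
    constructor
    · have h0 : A*B*(2*X) ≤ 2*(Wb*Wg)*(2*X) :=
        mul_le_mul_of_nonneg_right hq3 (by linarith)
      calc A*B*(2*X) ≤ 2*(Wb*Wg)*(2*X) := h0
      _ = 4*(Wb*Wg*X) := by ring
      _ ≤ 4*M := by linarith [hWWX]
    · have h1 : A*B*R ≤ 2*(Wb*Wg)*R := mul_le_mul_of_nonneg_right hq3 hRpos.le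
      have h2 : (Wb*Wg)*R ≤ (4*R^2)*R := mul_le_mul_of_nonneg_right hWbWg hRpos.le
      calc A*B*R ≤ 2*(Wb*Wg)*R := h1
      _ ≤ 2*((4*R^2)*R) := by linarith [h2]
      _ = 8*R^3 := by ring
  have hfin : 9*M + 8*R^3 < 5*R*(R+1)*(3*R+2) := by rw [hM]; exact aux_fin hR
  rcases hor with hc | hc
  · obtain ⟨q4', hq5⟩ := key (aux_able hA0 hB0 (by linarith) (by linarith) hc hB2)
    have q1 : A^2*NB ≤ Wb^2*NB := aux_sqmul hA0 (by linarith) hNB0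
    have q2 : B^2*NG ≤ 4*(Wg^2*NG) := aux_sqmul4 hB0 (by linarith) hNG0
    calc A^2*NB + A*B*(2*X+R) + B^2*NG
        = A^2*NB + A*B*(2*X) + A*B*R + B^2*NG := by ring
    _ ≤ M + 4*M + 8*R^3 + 4*M := by linarith [q1, hMb, q2, hMg, q4', hq5]
    _ = 9*M + 8*R^3 := by ring
    _ < 5*R*(R+1)*(3*R+2) := hfin
  · obtain ⟨q4', hq5⟩ := key (aux_able' hA0 hB0 (by linarith) (by linarith) hA2 hc)
    have q1 : A^2*NB ≤ 4*(Wb^2*NB) := aux_sqmul4 hA0 (by linarith) hNB0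
    have q2 : B^2*NG ≤ Wg^2*NG := aux_sqmul hB0 (by linarith) hNG0
    calc A^2*NB + A*B*(2*X+R) + B^2*NG
        = A^2*NB + A*B*(2*X) + A*B*R + B^2*NG := by ring
    _ ≤ 4*M + 4*M + 8*R^3 + M := by linarith [q1, hMb, q2, hMg, q4', hq5]
    _ = 9*M + 8*R^3 := by ring
    _ < 5*R*(R+1)*(3*R+2) := hfin

lemma aux_Xsq {B1 B2 G1 G2 R : ℝ} (hB1 : 0 < B1) (hG2 : 0 < G2)
    (h2 : B2*G1 = B1*G2 + R) (hR : 0 < R) :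
    (B1*G2)^2 ≤ (B1*B2)*(G1*G2) := by nlinarith [mul_pos hB1 hG2]

set_option maxHeartbeats 4000000 in
lemma main_half (hD : 2 ≤ D) (hsq : Squarefree D) (α : OK) (hα : TotPos D α)
    (hy : 0 ≤ α.2) (h : pKI D α = 2) :
    Nm D α < 5 * RR D * (RR D + 1) * (3 * RR D + 2) := by
  obtain ⟨i, hgpos, hgneg⟩ := exists_descent hD hsq α hα hy
  set pii := sq D i with hpii
  set bet := sq D (i+1) with hbet
  set gam := sq D (i+2) with hgam
  set del := sq D (i+3) with hdel
  have pπ : Pre D pii bet := preAll hD hsq i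
  have pB : Pre D bet gam := preAll hD hsq (i+1)
  have pG : Pre D gam del := preAll hD hsq (i+2)
  set vb : ℤ := wv D pii bet with hvb
  set vg : ℤ := wv D bet gam with hvg
  -- relations
  have relb : pii + gam = vb • bet := by
    rw [hgam, show sq D (i+2) = stp D (sq D i) (sq D (i+1)) from rfl]
    unfold stp
    rw [← hpii, ← hbet, ← hvb]
    abel
  have relg : bet + del = vg • gam := by
    rw [hdel, show sq D (i+3) = stp D (sq D (i+1)) (sq D (i+2)) from rfl]
    unfold stp
    rw [← hbet, ← hgam, ← hvg]
    abel
  have relb1 : pii.1 + gam.1 = vb * bet.1 := by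
    have := congrArg Prod.fst relb
    simpa [Prod.fst_add, Prod.smul_fst, smul_eq_mul] using this
  have relb2 : pii.2 + gam.2 = vb * bet.2 := by
    have := congrArg Prod.snd relb
    simpa [Prod.snd_add, Prod.smul_snd, smul_eq_mul] using this
  have relg1 : bet.1 + del.1 = vg * gam.1 := by
    have := congrArg Prod.fst relg
    simpa [Prod.fst_add, Prod.smul_fst, smul_eq_mul] using this
  have relg2 : bet.2 + del.2 = vg * gam.2 := by
    have := congrArg Prod.snd relg
    simpa [Prod.snd_add, Prod.smul_snd, smul_eq_mul] using this
  -- decomposition of α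
  have hdec := pB.coord hD α
  set a : ℤ := gam.2 * α.1 - gam.1 * α.2 with hadef
  set b : ℤ := bet.1 * α.2 - bet.2 * α.1 with hbdef
  have hc1 : α.1 = a * bet.1 + b * gam.1 := by
    have := congrArg Prod.fst hdec
    simpa [Prod.fst_add, Prod.smul_fst, smul_eq_mul] using this
  have hc2 : α.2 = a * bet.2 + b * gam.2 := by
    have := congrArg Prod.snd hdec
    simpa [Prod.snd_add, Prod.smul_snd, smul_eq_mul] using this
  have he1 : emb1 D α = (a:ℝ) * emb1 D bet + (b:ℝ) * emb1 D gam := by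
    rw [hdec, emb1_add, emb1_zsmul, emb1_zsmul]
  have he2 : emb2 D α = (a:ℝ) * emb2 D bet + (b:ℝ) * emb2 D gam := by
    rw [hdec, emb2_add, emb2_zsmul, emb2_zsmul]
  have hR := RR_pos hD
  -- signs of a and b
  have haR : (a:ℝ) * RR D
      = -(emb1 D α * emb2 D gam - emb2 D α * emb1 D gam) := by
    rw [he1, he2]
    linear_combination (a:ℝ) * pB.det
  have hbR : (b:ℝ) * RR D
      = emb1 D α * emb2 D bet - emb2 D α * emb1 D bet := by
    rw [he1, he2]
    linear_combination (b:ℝ) * pB.det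
  have hapos : 1 ≤ a := by
    have h1 : 0 < (a:ℝ) * RR D := by rw [haR]; linarith [hgneg]
    have h2 : 0 < (a:ℝ) := by
      by_contra hcon; push_neg at hcon
      nlinarith
    have h3 : 0 < a := by exact_mod_cast h2
    omega
  have hbpos : 0 ≤ b := by
    have h1 : 0 ≤ (b:ℝ) * RR D := by rw [hbR]; linarith [hgpos]
    have h2 : 0 ≤ (b:ℝ) := by
      by_contra hcon; push_neg at hcon
      nlinarith
    exact_mod_cast h2
  -- naturals
  have hS : ({s : Multiset OK | (∀ x ∈ s, Indec D x) ∧ s.sum = α}).ncard = 2 := h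
  set a' : ℕ := a.toNat with ha'
  set b' : ℕ := b.toNat with hb'
  set vb' : ℕ := vb.toNat with hvb'
  set vg' : ℕ := vg.toNat with hvg'
  have hvb2 : 2 ≤ vb := pπ.wv_ge_two hD hsq
  have hvg2 : 2 ≤ vg := pB.wv_ge_two hD hsq
  have hca : (a' : ℤ) = a := Int.toNat_of_nonneg (by omega)
  have hcb : (b' : ℤ) = b := Int.toNat_of_nonneg (by omega)
  have hcvb : (vb' : ℤ) = vb := Int.toNat_of_nonneg (by omega)
  have hcvg : (vg' : ℤ) = vg := Int.toNat_of_nonneg (by omega)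
  have hIp : Indec D pii := indecAll hD hsq i
  have hIb : Indec D bet := indecAll hD hsq (i+1)
  have hIg : Indec D gam := indecAll hD hsq (i+2)
  have hId : Indec D del := indecAll hD hsq (i+3)
  have e12 : emb1 D pii < emb1 D bet := pπ.lt1
  have e23 : emb1 D bet < emb1 D gam := pB.lt1
  have e34 : emb1 D gam < emb1 D del := pG.lt1
  have npd : pii ≠ del := by intro hh; rw [hh] at e12; linarith
  have nbd : bet ≠ del := by intro hh; rw [hh] at e23; linarith
  have ngd : gam ≠ del := by intro hh; rw [hh] at e34; linarith
  have nbp : bet ≠ pii := by intro hh; rw [hh] at e12; linarith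
  have ngp : gam ≠ pii := by intro hh; rw [hh] at e23; linarith
  have ndp : del ≠ pii := fun hh => npd hh.symm
  have hmk : ∀ k1 k2 k3 k4 : ℕ,
      ((k1:ℤ) * pii.1 + (k2:ℤ) * bet.1 + (k3:ℤ) * gam.1 + (k4:ℤ) * del.1 = α.1) →
      ((k1:ℤ) * pii.2 + (k2:ℤ) * bet.2 + (k3:ℤ) * gam.2 + (k4:ℤ) * del.2 = α.2) →
      pt pii bet gam del k1 k2 k3 k4 ∈
        {s : Multiset OK | (∀ x ∈ s, Indec D x) ∧ s.sum = α} := by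
    intro k1 k2 k3 k4 h1 h2
    exact ⟨pt_indec hIp hIb hIg hId, by rw [pt_sum_coord]; exact Prod.ext h1 h2⟩
  have hm0 : pt pii bet gam del 0 a' b' 0 ∈
      {s : Multiset OK | (∀ x ∈ s, Indec D x) ∧ s.sum = α} :=
    hmk 0 a' b' 0
      (by push_cast [hca, hcb]; linear_combination -hc1)
      (by push_cast [hca, hcb]; linear_combination -hc2)
  -- Exclusion 1 : b ≤ 2 vg - 1
  have excl1 : b ≤ 2 * vg - 1 := by
    by_contra hcon
    push_neg at hcon
    have hk2 : 2*vg' ≤ b' := by omega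
    have hm1 : pt pii bet gam del 0 (a'+1) (b'-vg') 1 ∈
        {s : Multiset OK | (∀ x ∈ s, Indec D x) ∧ s.sum = α} :=
      hmk 0 (a'+1) (b'-vg') 1
        (by rw [show ((b'-vg' : ℕ):ℤ) = b - vg by omega]; push_cast [hca]
            linear_combination -hc1 + relg1)
        (by rw [show ((b'-vg' : ℕ):ℤ) = b - vg by omega]; push_cast [hca]
            linear_combination -hc2 + relg2)
    have hm2 : pt pii bet gam del 0 (a'+2) (b'-2*vg') 2 ∈
        {s : Multiset OK | (∀ x ∈ s, Indec D x) ∧ s.sum = α} :=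
      hmk 0 (a'+2) (b'-2*vg') 2
        (by rw [show ((b'-2*vg' : ℕ):ℤ) = b - 2*vg by omega]; push_cast [hca]
            linear_combination -hc1 + 2*relg1)
        (by rw [show ((b'-2*vg' : ℕ):ℤ) = b - 2*vg by omega]; push_cast [hca]
            linear_combination -hc2 + 2*relg2)
    refine three_not_two hS hm0 hm1 hm2 ?_ ?_ ?_
    · intro he
      have := congrArg (Multiset.count del) he
      rw [pt_count_last npd nbd ngd, pt_count_last npd nbd ngd] at this
      omega
    · intro he
      have := congrArg (Multiset.count del) he
      rw [pt_count_last npd nbd ngd, pt_count_last npd nbd ngd] at this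
      omega
    · intro he
      have := congrArg (Multiset.count del) he
      rw [pt_count_last npd nbd ngd, pt_count_last npd nbd ngd] at this
      omega
  -- Exclusion 2 : a ≤ 2 vb - 1
  have excl2 : a ≤ 2 * vb - 1 := by
    by_contra hcon
    push_neg at hcon
    have hk2 : 2*vb' ≤ a' := by omega
    have hm1 : pt pii bet gam del 1 (a'-vb') (b'+1) 0 ∈
        {s : Multiset OK | (∀ x ∈ s, Indec D x) ∧ s.sum = α} :=
      hmk 1 (a'-vb') (b'+1) 0
        (by rw [show ((a'-vb' : ℕ):ℤ) = a - vb by omega]; push_cast [hcb]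
            linear_combination -hc1 + relb1)
        (by rw [show ((a'-vb' : ℕ):ℤ) = a - vb by omega]; push_cast [hcb]
            linear_combination -hc2 + relb2)
    have hm2 : pt pii bet gam del 2 (a'-2*vb') (b'+2) 0 ∈
        {s : Multiset OK | (∀ x ∈ s, Indec D x) ∧ s.sum = α} :=
      hmk 2 (a'-2*vb') (b'+2) 0
        (by rw [show ((a'-2*vb' : ℕ):ℤ) = a - 2*vb by omega]; push_cast [hcb]
            linear_combination -hc1 + 2*relb1)
        (by rw [show ((a'-2*vb' : ℕ):ℤ) = a - 2*vb by omega]; push_cast [hcb]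
            linear_combination -hc2 + 2*relb2)
    refine three_not_two hS hm0 hm1 hm2 ?_ ?_ ?_
    · intro he
      have := congrArg (Multiset.count pii) he
      rw [pt_count_first nbp ngp ndp, pt_count_first nbp ngp ndp] at this
      omega
    · intro he
      have := congrArg (Multiset.count pii) he
      rw [pt_count_first nbp ngp ndp, pt_count_first nbp ngp ndp] at this
      omega
    · intro he
      have := congrArg (Multiset.count pii) he
      rw [pt_count_first nbp ngp ndp, pt_count_first nbp ngp ndp] at this
      omega
  -- Exclusion 3
  have excl3 : a ≤ vb - 1 ∨ b ≤ vg - 1 := by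
    by_contra hcon
    push_neg at hcon
    obtain ⟨hA, hB⟩ := hcon
    have hk1 : vg' ≤ b' := by omega
    have hk2 : vb' ≤ a' := by omega
    have hm1 : pt pii bet gam del 0 (a'+1) (b'-vg') 1 ∈
        {s : Multiset OK | (∀ x ∈ s, Indec D x) ∧ s.sum = α} :=
      hmk 0 (a'+1) (b'-vg') 1
        (by rw [show ((b'-vg' : ℕ):ℤ) = b - vg by omega]; push_cast [hca]
            linear_combination -hc1 + relg1)
        (by rw [show ((b'-vg' : ℕ):ℤ) = b - vg by omega]; push_cast [hca]
            linear_combination -hc2 + relg2)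
    have hm2 : pt pii bet gam del 1 (a'-vb') (b'+1) 0 ∈
        {s : Multiset OK | (∀ x ∈ s, Indec D x) ∧ s.sum = α} :=
      hmk 1 (a'-vb') (b'+1) 0
        (by rw [show ((a'-vb' : ℕ):ℤ) = a - vb by omega]; push_cast [hcb]
            linear_combination -hc1 + relb1)
        (by rw [show ((a'-vb' : ℕ):ℤ) = a - vb by omega]; push_cast [hcb]
            linear_combination -hc2 + relb2)
    refine three_not_two hS hm0 hm1 hm2 ?_ ?_ ?_
    · intro he
      have := congrArg (Multiset.count del) he
      rw [pt_count_last npd nbd ngd, pt_count_last npd nbd ngd] at this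
      omega
    · intro he
      have := congrArg (Multiset.count pii) he
      rw [pt_count_first nbp ngp ndp, pt_count_first nbp ngp ndp] at this
      omega
    · intro he
      have := congrArg (Multiset.count del) he
      rw [pt_count_last npd nbd ngd, pt_count_last npd nbd ngd] at this
      omega
  -- ================= final numeric bound =================
  have hRgt : 2 < RR D := RR_gt_two hD
  have hNble : (nrm D bet : ℝ) ≤ RR D^2/4 := nrm_sq_le hD hsq (i+1)
  have hNb1 : (1:ℝ) ≤ (nrm D bet : ℝ) := nrm_ge_one hD hsq ⟨pB.b1, pB.b2⟩
  have hNg1 : (1:ℝ) ≤ (nrm D gam : ℝ) := nrm_ge_one hD hsq ⟨pB.g1, pB.g2⟩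
  have hvbsq : (vb:ℝ)^2 * (nrm D bet:ℝ) ≤ (5/4)*RR D^2 + ((vb:ℝ)+1)*RR D :=
    pπ.v_sq_nrm hD hsq (nrm_sq_le hD hsq i)
  have hvgsq : (vg:ℝ)^2 * (nrm D gam:ℝ) ≤ (5/4)*RR D^2 + ((vg:ℝ)+1)*RR D :=
    pB.v_sq_nrm hD hsq hNble
  have hvble : (vb:ℝ) ≤ 2*RR D := pπ.v_le hD hsq (nrm_sq_le hD hsq i)
  have hvgle : (vg:ℝ) ≤ 2*RR D := pB.v_le hD hsq hNble
  have hvb2r : (2:ℝ) ≤ (vb:ℝ) := by exact_mod_cast hvb2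
  have hvg2r : (2:ℝ) ≤ (vg:ℝ) := by exact_mod_cast hvg2
  have hXpos : 0 < emb1 D bet * emb2 D gam := mul_pos pB.b1 pB.g2
  have hX2 : emb2 D bet * emb1 D gam = emb1 D bet * emb2 D gam + RR D := by
    linear_combination -pB.det
  have hNbr : (nrm D bet : ℝ) = emb1 D bet * emb2 D bet := nrm_cast hD bet
  have hNgr : (nrm D gam : ℝ) = emb1 D gam * emb2 D gam := nrm_cast hD gam
  have hXsq : (emb1 D bet * emb2 D gam)^2 ≤ (nrm D bet:ℝ) * (nrm D gam:ℝ) := by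
    rw [hNbr, hNgr]
    exact aux_Xsq pB.b1 pB.g2 hX2 hR
  have hexp : emb1 D α * emb2 D α
      = (a:ℝ)^2 * (nrm D bet:ℝ) + (a:ℝ)*(b:ℝ)*(2*(emb1 D bet * emb2 D gam) + RR D)
        + (b:ℝ)^2 * (nrm D gam:ℝ) := by
    rw [he1, he2, hNbr, hNgr]
    linear_combination ((a:ℝ)*(b:ℝ)) * hX2
  have hare : (a:ℝ) ≤ 2*(vb:ℝ) - 1 := by
    have := intCast_le excl2; push_cast at this; linarith
  have hbre : (b:ℝ) ≤ 2*(vg:ℝ) - 1 := by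
    have := intCast_le excl1; push_cast at this; linarith
  have hane : (1:ℝ) ≤ (a:ℝ) := by exact_mod_cast hapos
  have hbne : (0:ℝ) ≤ (b:ℝ) := by exact_mod_cast hbpos
  have hor : (a:ℝ) ≤ (vb:ℝ) - 1 ∨ (b:ℝ) ≤ (vg:ℝ) - 1 := by
    rcases excl3 with hc | hc
    · left; have := intCast_le hc; push_cast at this; linarith
    · right; have := intCast_le hc; push_cast at this; linarith
  show emb1 D α * emb2 D α < _
  rw [hexp]
  exact final_bound (RR D) (a:ℝ) (b:ℝ) (vb:ℝ) (vg:ℝ) (nrm D bet:ℝ) (nrm D gam:ℝ)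
    (emb1 D bet * emb2 D gam) hRgt hvb2r hvble hvg2r hvgle hNb1 hNg1
    hvbsq hvgsq hXpos hXsq hane hbne hare hbre hor

end Main

end Stmt12Proof

/-- norm bound for elements with exactly two representations
as sums of indecomposables. -/
theorem stmt12 (D : ℕ) (hD : 2 ≤ D) (hsq : Squarefree D)
    (α : OK) (hα : TotPos D α) (h : pKI D α = 2) :
    Nm D α < 5 * Real.sqrt (disc D) * (Real.sqrt (disc D) + 1) *
      (3 * Real.sqrt (disc D) + 2) := by
  rcases le_or_gt 0 α.2 with hy | hy
  · exact Stmt12Proof.main_half hD hsq α hα hy h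
  · have h2 : pKI D (conjOK D α) = 2 := by
      rw [Stmt12Proof.pKI_conj]; exact h
    have hy2 : 0 ≤ (conjOK D α).2 := by
      rw [Stmt12Proof.conj_snd]; omega
    have hres := Stmt12Proof.main_half hD hsq (conjOK D α)
      (Stmt12Proof.totpos_conj hα) hy2 h2
    rw [Stmt12Proof.Nm_conj] at hres
    exact hres
end
end
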